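/- Let c_n denote the number of level one cheesy polyominoes with area n (counted up to translation, with c_0 = 0). Then in ℚ⟦q⟧ one has the identity (1 − 6q + 8q² − q³) · (∑_{n≥0} c_n qⁿ) = q − 3q² + q³, i.e. the area generating function of level one cheesy polyominoes equals q(1 − 3q + q²) / (1 − 6q + 8q² − q³). -/

import Mathlib

open Finset Filter

noncomputable section

/-- A cell of the hexagonal lattice, modelled as a point of ℤ². -/
abbrev Cell : Type := ℤ × ℤ

/-- Hexagonal adjacency on ℤ². -/
def HexAdj (a b : Cell) : Prop :=
  (b.1 - a.1, b.2 - a.2) ∈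
    ({(1,0), (-1,0), (0,1), (0,-1), (1,1), (-1,-1)} : Set (ℤ × ℤ))

/-- A (hexagonal-celled) polyomino: a finite nonempty set of cells,
connected under hexagonal adjacency. -/
def IsPolyomino (P : Finset Cell) : Prop :=
  P.Nonempty ∧ ∀ a ∈ P, ∀ b ∈ P,
    Relation.ReflTransGen (fun u v : Cell => u ∈ P ∧ v ∈ P ∧ HexAdj u v) a b

/-- The canonical representative of a translation class: both the minimal
abscissa and the minimal ordinate are `0`. -/
def Normalized (P : Finset Cell) : Prop :=
  (∀ c ∈ P, 0 ≤ c.1 ∧ 0 ≤ c.2) ∧ (∃ c ∈ P, c.1 = 0) ∧ (∃ c ∈ P, c.2 = 0)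

/-- Ordinates of the cells of the column of `P` at abscissa `x`. -/
def columnYs (P : Finset Cell) (x : ℤ) : Finset ℤ :=
  (P.filter (fun c => c.1 = x)).image Prod.snd

/-- Number of connected components (maximal runs of consecutive integers) of a
finite set of integers: each component is counted via its least element. -/
def numComponents (s : Finset ℤ) : ℕ := (s.filter (fun a => a - 1 ∉ s)).card

/-- Every nonempty column has exactly one connected component. -/
def ColumnConvex (P : Finset Cell) : Prop :=
  ∀ x : ℤ, (columnYs P x).Nonempty → numComponents (columnYs P x) = 1

/-- `a` and `b` lie in the same connected component of `s`. -/
def SameComp (s : Finset ℤ) (a b : ℤ) : Prop :=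
  a ∈ s ∧ b ∈ s ∧ ∀ c : ℤ, min a b ≤ c → c ≤ max a b → c ∈ s

/-- The leftmost nonempty column has exactly one connected component and, for
every pair of nonempty columns at consecutive abscissas `x`, `x+1`, every
connected component of the column at `x+1` contains a cell adjacent to some
cell of the column at `x`. -/
def RightwardSemiDirected (P : Finset Cell) : Prop :=
  (∀ x : ℤ, (columnYs P x).Nonempty → (∀ x' : ℤ, x' < x → columnYs P x' = ∅) →
      numComponents (columnYs P x) = 1) ∧
  (∀ x : ℤ, (columnYs P x).Nonempty → (columnYs P (x+1)).Nonempty →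
      ∀ b ∈ columnYs P (x+1), ∃ b' ∈ columnYs P (x+1),
        SameComp (columnYs P (x+1)) b b' ∧
        ∃ c ∈ columnYs P x, HexAdj (x, c) (x+1, b'))

/-- The cells of the gap(s) of a column: the integers between the least and the
greatest element that do not belong to the column. -/
def gapCells (s : Finset ℤ) : Finset ℤ :=
  Finset.Icc (WithTop.untopD 0 s.min) (WithBot.unbotD 0 s.max) \ s

def gapSize (s : Finset ℤ) : ℕ := (gapCells s).card

/-- Level `m` cheesy polyomino. -/
def IsCheesy (m : ℕ) (P : Finset Cell) : Prop :=
  IsPolyomino P ∧ RightwardSemiDirected P ∧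
  ∀ x : ℤ, numComponents (columnYs P x) ≤ 2 ∧
    (numComponents (columnYs P x) = 2 → gapSize (columnYs P x) ≤ m)

/-- Height of a (nonempty) column: max − min + 1. -/
def heightN (s : Finset ℤ) : ℕ :=
  (WithBot.unbotD 0 s.max - WithTop.untopD 0 s.min + 1).toNat

/-- The maximal abscissa of a polyomino. -/
def maxX (P : Finset Cell) : ℤ := WithBot.unbotD 0 (P.image Prod.fst).max

/-- The last column (ordinates of the column of maximal abscissa). -/
def lastCol (P : Finset Cell) : Finset ℤ := columnYs P (maxX P)

/-- Number of level `m` cheesy polyominoes with area `n`, counted up to translation. -/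
def cheesyCount (m n : ℕ) : ℕ :=
  Nat.card {P : Finset Cell // IsCheesy m P ∧ Normalized P ∧ P.card = n}

open Finset

namespace Cheesy

def mn (s : Finset ℤ) : ℤ := WithTop.untopD 0 s.min
def mx (s : Finset ℤ) : ℤ := WithBot.unbotD 0 s.max

lemma mn_eq {s : Finset ℤ} (hs : s.Nonempty) : mn s = s.min' hs := by
  simp [mn, ← Finset.coe_min' hs]
lemma mx_eq {s : Finset ℤ} (hs : s.Nonempty) : mx s = s.max' hs := by
  simp [mx, ← Finset.coe_max' hs]

lemma mn_mem {s : Finset ℤ} (hs : s.Nonempty) : mn s ∈ s := by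
  rw [mn_eq hs]; exact s.min'_mem hs
lemma mx_mem {s : Finset ℤ} (hs : s.Nonempty) : mx s ∈ s := by
  rw [mx_eq hs]; exact s.max'_mem hs
lemma mn_le {s : Finset ℤ} {a : ℤ} (ha : a ∈ s) : mn s ≤ a := by
  rw [mn_eq ⟨a, ha⟩]; exact s.min'_le a ha
lemma le_mx {s : Finset ℤ} {a : ℤ} (ha : a ∈ s) : a ≤ mx s := by
  rw [mx_eq ⟨a, ha⟩]; exact s.le_max' a ha
lemma mn_le_mx {s : Finset ℤ} (hs : s.Nonempty) : mn s ≤ mx s :=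
  le_trans (mn_le (mx_mem hs)) le_rfl
lemma subset_Icc_mn_mx (s : Finset ℤ) : s ⊆ Finset.Icc (mn s) (mx s) := by
  intro a ha; exact Finset.mem_Icc.2 ⟨mn_le ha, le_mx ha⟩
lemma mn_unique {s : Finset ℤ} {a : ℤ} (ha : a ∈ s) (h : ∀ x ∈ s, a ≤ x) :
    mn s = a := le_antisymm (mn_le ha) (h _ (mn_mem ⟨a, ha⟩))
lemma mx_unique {s : Finset ℤ} {a : ℤ} (ha : a ∈ s) (h : ∀ x ∈ s, x ≤ a) :
    mx s = a := le_antisymm (h _ (mx_mem ⟨a, ha⟩)) (le_mx ha)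

lemma mn_Icc {a b : ℤ} (h : a ≤ b) : mn (Finset.Icc a b) = a :=
  mn_unique (by simp [h]) (by intro x hx; exact (Finset.mem_Icc.1 hx).1)
lemma mx_Icc {a b : ℤ} (h : a ≤ b) : mx (Finset.Icc a b) = b :=
  mx_unique (by simp [h]) (by intro x hx; exact (Finset.mem_Icc.1 hx).2)

lemma mn_two {a b c : ℤ} (h1 : a ≤ b) (h2 : b + 2 ≤ c) :
    mn (Finset.Icc a b ∪ Finset.Icc (b+2) c) = a := by
  apply mn_unique
  · simp [Finset.mem_union, Finset.mem_Icc, h1]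
  · intro x hx; simp only [Finset.mem_union, Finset.mem_Icc] at hx; omega
lemma mx_two {a b c : ℤ} (h1 : a ≤ b) (h2 : b + 2 ≤ c) :
    mx (Finset.Icc a b ∪ Finset.Icc (b+2) c) = c := by
  apply mx_unique
  · simp only [Finset.mem_union, Finset.mem_Icc]; omega
  · intro x hx; simp only [Finset.mem_union, Finset.mem_Icc] at hx; omega

/-- A legal column of a level-1 cheesy polyomino. -/
def ColOK (s : Finset ℤ) : Prop :=
  (∃ a b : ℤ, a ≤ b ∧ s = Finset.Icc a b) ∨
  (∃ a b c : ℤ, a ≤ b ∧ b + 2 ≤ c ∧ s = Finset.Icc a b ∪ Finset.Icc (b+2) c)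

lemma ColOK.nonempty {s : Finset ℤ} (h : ColOK s) : s.Nonempty := by
  rcases h with ⟨a, b, h1, rfl⟩ | ⟨a, b, c, h1, h2, rfl⟩
  · exact ⟨a, by simp [h1]⟩
  · exact ⟨a, by simp [Finset.mem_union, Finset.mem_Icc, h1]⟩

lemma numComponents_Icc {a b : ℤ} (h : a ≤ b) :
    numComponents (Finset.Icc a b) = 1 := by
  have : (Finset.Icc a b).filter (fun x => x - 1 ∉ Finset.Icc a b) = {a} := by
    ext x; simp only [Finset.mem_filter, Finset.mem_Icc, Finset.mem_singleton]; omega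
  rw [numComponents, this, Finset.card_singleton]

lemma numComponents_two {a b c : ℤ} (h1 : a ≤ b) (h2 : b + 2 ≤ c) :
    numComponents (Finset.Icc a b ∪ Finset.Icc (b+2) c) = 2 := by
  have : (Finset.Icc a b ∪ Finset.Icc (b+2) c).filter
      (fun x => x - 1 ∉ Finset.Icc a b ∪ Finset.Icc (b+2) c) = {a, b+2} := by
    ext x
    simp only [Finset.mem_filter, Finset.mem_union, Finset.mem_Icc,
      Finset.mem_insert, Finset.mem_singleton, not_or]
    omega
  rw [numComponents, this, Finset.card_insert_of_notMem (by simp; omega),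
    Finset.card_singleton]

lemma gapSize_Icc {a b : ℤ} (h : a ≤ b) : gapSize (Finset.Icc a b) = 0 := by
  have hmn : (WithTop.untopD 0 (Finset.Icc a b).min) = a := mn_Icc h
  have hmx : (WithBot.unbotD 0 (Finset.Icc a b).max) = b := mx_Icc h
  rw [gapSize, gapCells, hmn, hmx, Finset.sdiff_self, Finset.card_empty]

lemma gapSize_two {a b c : ℤ} (h1 : a ≤ b) (h2 : b + 2 ≤ c) :
    gapSize (Finset.Icc a b ∪ Finset.Icc (b+2) c) = 1 := by
  have hmn := mn_two h1 h2
  have hmx := mx_two h1 h2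
  rw [gapSize, gapCells]
  rw [show (WithTop.untopD 0 (Finset.Icc a b ∪ Finset.Icc (b+2) c).min) =
    mn (Finset.Icc a b ∪ Finset.Icc (b+2) c) from rfl, hmn]
  rw [show (WithBot.unbotD 0 (Finset.Icc a b ∪ Finset.Icc (b+2) c).max) =
    mx (Finset.Icc a b ∪ Finset.Icc (b+2) c) from rfl, hmx]
  have : Finset.Icc a c \ (Finset.Icc a b ∪ Finset.Icc (b+2) c) = {b+1} := by
    ext x
    simp only [Finset.mem_sdiff, Finset.mem_union, Finset.mem_Icc,
      Finset.mem_singleton, not_or]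
    omega
  rw [this, Finset.card_singleton]

/-- in a set with one component, descending stays in the set -/
lemma descend {s : Finset ℤ} (h1 : numComponents s = 1) :
    ∀ x ∈ s, ∀ y : ℤ, mn s ≤ y → y ≤ x → y ∈ s := by
  have hfil : s.filter (fun a => a - 1 ∉ s) = {mn s} := by
    have hne : s.Nonempty := by
      rcases Finset.eq_empty_or_nonempty s with rfl | h
      · simp [numComponents] at h1
      · exact h
    apply Finset.eq_singleton_iff_unique_mem.2
    constructor
    · refine Finset.mem_filter.2 ⟨mn_mem hne, fun hc => ?_⟩
      have := mn_le hc; omega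
    · intro x hx
      have hcard := h1
      rw [numComponents] at hcard
      have hmem : mn s ∈ s.filter (fun a => a - 1 ∉ s) := by
        refine Finset.mem_filter.2 ⟨mn_mem hne, fun hc => ?_⟩
        have := mn_le hc; omega
      rcases Finset.card_eq_one.1 hcard with ⟨z, hz⟩
      rw [hz] at hx hmem
      simp only [Finset.mem_singleton] at hx hmem
      rw [hx, hmem]
  intro x hx y hy hyx
  obtain ⟨k, hk⟩ : ∃ k : ℕ, x - y = k := ⟨(x-y).toNat, by omega⟩
  induction k generalizing x with
  | zero => have : y = x := by omega
            rwa [this]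
  | succ n ih =>
    have hx1 : x - 1 ∈ s := by
      by_contra hc
      have : x ∈ s.filter (fun a => a - 1 ∉ s) := Finset.mem_filter.2 ⟨hx, hc⟩
      rw [hfil] at this
      simp only [Finset.mem_singleton] at this
      have := mn_le hx; omega
    exact ih _ hx1 (by omega) (by omega)

lemma eq_Icc_of_one {s : Finset ℤ} (hs : s.Nonempty) (h1 : numComponents s = 1) :
    s = Finset.Icc (mn s) (mx s) := by
  apply Finset.Subset.antisymm (subset_Icc_mn_mx s)
  intro y hy
  rw [Finset.mem_Icc] at hy
  exact descend h1 _ (mx_mem hs) y hy.1 hy.2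

lemma numComponents_pos {s : Finset ℤ} (hs : s.Nonempty) : numComponents s ≠ 0 := by
  intro hc
  rw [numComponents, Finset.card_eq_zero] at hc
  have : mn s ∈ s.filter (fun a => a - 1 ∉ s) := by
    refine Finset.mem_filter.2 ⟨mn_mem hs, fun h => ?_⟩
    have := mn_le h; omega
  rw [hc] at this; exact absurd this (Finset.notMem_empty _)

/-- characterization of legal level-1 columns -/
lemma colOK_of {s : Finset ℤ} (hs : s.Nonempty) (h2 : numComponents s ≤ 2)
    (hg : numComponents s = 2 → gapSize s ≤ 1) : ColOK s := by
  interval_cases h : numComponents s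
  · exact absurd h (numComponents_pos hs)
  · exact Or.inl ⟨mn s, mx s, mn_le_mx hs, eq_Icc_of_one hs h⟩
  · have hgap := hg rfl
    have hgc : gapCells s = Finset.Icc (mn s) (mx s) \ s := rfl
    have hgne : (gapCells s).Nonempty := by
      rcases Finset.eq_empty_or_nonempty (gapCells s) with he | hne
      · exfalso
        have hsub : Finset.Icc (mn s) (mx s) ⊆ s := by
          intro x hx
          by_contra hc
          have : x ∈ gapCells s := Finset.mem_sdiff.2 ⟨hx, hc⟩
          rw [he] at this; exact absurd this (Finset.notMem_empty _)
        have : s = Finset.Icc (mn s) (mx s) :=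
          Finset.Subset.antisymm (subset_Icc_mn_mx s) hsub
        rw [this, numComponents_Icc (mn_le_mx hs)] at h; omega
      · exact hne
    have hcard : (gapCells s).card = 1 := by
      have := Finset.card_pos.2 hgne
      rw [gapSize] at hgap; omega
    obtain ⟨g, hgeq⟩ := Finset.card_eq_one.1 hcard
    have hgmem : g ∈ Finset.Icc (mn s) (mx s) \ s := by
      rw [← hgc, hgeq]; simp
    rw [Finset.mem_sdiff, Finset.mem_Icc] at hgmem
    obtain ⟨⟨hg1, hg2⟩, hg3⟩ := hgmem
    have hsub : ∀ x, mn s ≤ x → x ≤ mx s → x ≠ g → x ∈ s := by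
      intro x hx1 hx2 hx3
      by_contra hc
      have : x ∈ gapCells s := Finset.mem_sdiff.2 ⟨Finset.mem_Icc.2 ⟨hx1, hx2⟩, hc⟩
      rw [hgeq] at this
      simp only [Finset.mem_singleton] at this
      exact hx3 this
    have hga : mn s ≠ g := fun hc => hg3 (hc ▸ mn_mem hs)
    have hgb : mx s ≠ g := fun hc => hg3 (hc ▸ mx_mem hs)
    refine Or.inr ⟨mn s, g - 1, mx s, by omega, by omega, ?_⟩
    ext x
    simp only [Finset.mem_union, Finset.mem_Icc]
    constructor
    · intro hx
      have := mn_le hx; have := le_mx hx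
      have : x ≠ g := fun hc => hg3 (hc ▸ hx)
      omega
    · intro hx
      rcases hx with ⟨h1', h2'⟩ | ⟨h1', h2'⟩
      · exact hsub x h1' (by omega) (by omega)
      · exact hsub x (by omega) h2' (by omega)

end Cheesy
namespace Cheesy

/-- `Icc a b` is a connected component of `s`. -/
def IsComp (s : Finset ℤ) (a b : ℤ) : Prop :=
  a ≤ b ∧ Finset.Icc a b ⊆ s ∧ a - 1 ∉ s ∧ b + 1 ∉ s

lemma isComp_Icc {a b u v : ℤ} (h : a ≤ b) :
    IsComp (Finset.Icc a b) u v ↔ u = a ∧ v = b := by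
  constructor
  · rintro ⟨h1, h2, h3, h4⟩
    have hu : u ∈ Finset.Icc a b := h2 (Finset.mem_Icc.2 ⟨le_rfl, h1⟩)
    have hv : v ∈ Finset.Icc a b := h2 (Finset.mem_Icc.2 ⟨h1, le_rfl⟩)
    rw [Finset.mem_Icc] at hu hv h3 h4
    omega
  · rintro ⟨rfl, rfl⟩
    exact ⟨h, le_rfl, by rw [Finset.mem_Icc]; omega, by rw [Finset.mem_Icc]; omega⟩

lemma isComp_two {a b c u v : ℤ} (h1 : a ≤ b) (h2 : b + 2 ≤ c) :
    IsComp (Finset.Icc a b ∪ Finset.Icc (b+2) c) u v ↔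
      (u = a ∧ v = b) ∨ (u = b + 2 ∧ v = c) := by
  constructor
  · rintro ⟨hle, hsub, h3, h4⟩
    have hu : u ∈ _ := hsub (Finset.mem_Icc.2 ⟨le_rfl, hle⟩)
    have hv : v ∈ _ := hsub (Finset.mem_Icc.2 ⟨hle, le_rfl⟩)
    simp only [Finset.mem_union, Finset.mem_Icc, not_or] at hu hv h3 h4
    by_cases hub : u ≤ b
    · -- u in lower part; v must be ≤ b since b+1 not in s
      have hvb : v ≤ b := by
        by_contra hc
        have : b + 1 ∈ Finset.Icc u v := Finset.mem_Icc.2 ⟨by omega, by omega⟩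
        have := hsub this
        simp only [Finset.mem_union, Finset.mem_Icc] at this
        omega
      left; omega
    · right; omega
  · rintro (⟨rfl, rfl⟩ | ⟨rfl, rfl⟩)
    · refine ⟨h1, fun x hx => ?_, ?_, ?_⟩
      · rw [Finset.mem_Icc] at hx
        simp only [Finset.mem_union, Finset.mem_Icc]; omega
      · simp only [Finset.mem_union, Finset.mem_Icc, not_or]; omega
      · simp only [Finset.mem_union, Finset.mem_Icc, not_or]; omega
    · refine ⟨by omega, fun x hx => ?_, ?_, ?_⟩
      · rw [Finset.mem_Icc] at hx
        simp only [Finset.mem_union, Finset.mem_Icc]; omega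
      · simp only [Finset.mem_union, Finset.mem_Icc, not_or]; omega
      · simp only [Finset.mem_union, Finset.mem_Icc, not_or]; omega

/-- every component of `t` is adjacent (hex) to the column `s` on its left. -/
def Attach (s t : Finset ℤ) : Prop :=
  ∀ a b : ℤ, IsComp t a b → a ≤ mx s + 1 ∧ mn s ≤ b

/-- the set of ordinates reachable from column s (to its right) is the
interval [mn s, mx s + 1], provided s is a legal column. -/
lemma neighbor_iff {s : Finset ℤ} (h : ColOK s) (y : ℤ) :
    (∃ c ∈ s, y = c ∨ y = c + 1) ↔ mn s ≤ y ∧ y ≤ mx s + 1 := by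
  constructor
  · rintro ⟨c, hc, hy⟩
    have := mn_le hc; have := le_mx hc; omega
  · rintro ⟨hy1, hy2⟩
    rcases h with ⟨a, b, hab, rfl⟩ | ⟨a, b, c, hab, hbc, rfl⟩
    · rw [mn_Icc hab] at hy1; rw [mx_Icc hab] at hy2
      by_cases hyb : y ≤ b
      · exact ⟨y, Finset.mem_Icc.2 ⟨hy1, hyb⟩, Or.inl rfl⟩
      · exact ⟨b, Finset.mem_Icc.2 ⟨hab, le_rfl⟩, Or.inr (by omega)⟩
    · rw [mn_two hab hbc] at hy1; rw [mx_two hab hbc] at hy2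
      by_cases hyb : y ≤ b
      · exact ⟨y, by simp only [Finset.mem_union, Finset.mem_Icc]; omega, Or.inl rfl⟩
      · by_cases hyb2 : y ≤ b + 1
        · exact ⟨b, by simp only [Finset.mem_union, Finset.mem_Icc]; omega,
            Or.inr (by omega)⟩
        · by_cases hyc : y ≤ c
          · exact ⟨y, by simp only [Finset.mem_union, Finset.mem_Icc]; omega,
              Or.inl rfl⟩
          · exact ⟨c, by simp only [Finset.mem_union, Finset.mem_Icc]; omega,
              Or.inr (by omega)⟩

/-- `SameComp` within an interval. -/
lemma sameComp_Icc {a b x y : ℤ} (hx : x ∈ Finset.Icc a b) (hy : y ∈ Finset.Icc a b) :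
    SameComp (Finset.Icc a b) x y := by
  rw [Finset.mem_Icc] at hx hy
  exact ⟨Finset.mem_Icc.2 hx, Finset.mem_Icc.2 hy,
    fun c h1 h2 => Finset.mem_Icc.2 ⟨by simp [min_def] at h1 ⊢; omega,
      by simp [max_def] at h2 ⊢; omega⟩⟩

/-- SameComp implies being in a common component-interval. -/
lemma sameComp_sub {s : Finset ℤ} {x y : ℤ} (h : SameComp s x y) :
    ∀ c : ℤ, min x y ≤ c → c ≤ max x y → c ∈ s := h.2.2

end Cheesy
namespace Cheesy

lemma hexAdj_iff {x c b' : ℤ} : HexAdj (x, c) (x + 1, b') ↔ b' = c ∨ b' = c + 1 := by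
  simp only [HexAdj, Set.mem_insert_iff, Set.mem_singleton_iff, Prod.mk.injEq]
  constructor
  · rintro (h | h | h | h | h | h) <;> omega
  · rintro (h | h)
    · left; omega
    · right; right; right; right; left; omega

/-- the RSD condition between two consecutive columns, abstractly. -/
def RSDpair (s t : Finset ℤ) : Prop :=
  ∀ b ∈ t, ∃ b' ∈ t, SameComp t b b' ∧ ∃ c ∈ s, (b' = c ∨ b' = c + 1)

lemma sameComp_of_Icc_sub {t : Finset ℤ} {a b x y : ℤ}
    (hsub : Finset.Icc a b ⊆ t) (hx : x ∈ Finset.Icc a b) (hy : y ∈ Finset.Icc a b) :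
    SameComp t x y := by
  rw [Finset.mem_Icc] at hx hy
  refine ⟨hsub (Finset.mem_Icc.2 hx), hsub (Finset.mem_Icc.2 hy), fun c h1 h2 => ?_⟩
  apply hsub
  rw [Finset.mem_Icc]
  simp only [min_def, max_def] at h1 h2
  constructor <;> [skip; skip] <;> split_ifs at h1 h2 <;> omega

lemma mem_comp {t : Finset ℤ} (ht : ColOK t) {b : ℤ} (hb : b ∈ t) :
    ∃ a₂ b₂, IsComp t a₂ b₂ ∧ a₂ ≤ b ∧ b ≤ b₂ := by
  rcases ht with ⟨a, b', hab, rfl⟩ | ⟨a, b', c, hab, hbc, rfl⟩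
  · rw [Finset.mem_Icc] at hb
    exact ⟨a, b', (isComp_Icc hab).2 ⟨rfl, rfl⟩, hb.1, hb.2⟩
  · simp only [Finset.mem_union, Finset.mem_Icc] at hb
    rcases hb with h | h
    · exact ⟨a, b', (isComp_two hab hbc).2 (Or.inl ⟨rfl, rfl⟩), h.1, h.2⟩
    · exact ⟨b' + 2, c, (isComp_two hab hbc).2 (Or.inr ⟨rfl, rfl⟩), h.1, h.2⟩

lemma comp_sub {t : Finset ℤ} {a b : ℤ} (h : IsComp t a b) : Finset.Icc a b ⊆ t := h.2.1

lemma rsdpair_iff_attach {s t : Finset ℤ} (hs : ColOK s) (ht : ColOK t) :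
    RSDpair s t ↔ Attach s t := by
  constructor
  · intro h a b hab
    obtain ⟨ha, hsub, hL, hR⟩ := hab
    obtain ⟨b', hb't, hsc, c, hc, hbc⟩ := h a (hsub (Finset.mem_Icc.2 ⟨le_rfl, ha⟩))
    -- b' lies in the same component as a, i.e. in [a,b]
    have hb'mem : a ≤ b' ∧ b' ≤ b := by
      by_contra hcon
      push_neg at hcon
      by_cases h1 : b' < a
      · have : a - 1 ∈ t := sameComp_sub hsc (a-1) (by omega) (by omega)
        exact hL this
      · have h2 : b < b' := by omega
        have : b + 1 ∈ t := sameComp_sub hsc (b+1) (by omega) (by omega)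
        exact hR this
    have hnb : mn s ≤ b' ∧ b' ≤ mx s + 1 := (neighbor_iff hs b').1 ⟨c, hc, hbc⟩
    omega
  · intro h b hb
    obtain ⟨a₂, b₂, hcomp, ha₂, hb₂⟩ := mem_comp ht hb
    obtain ⟨hmx', hmn'⟩ := h a₂ b₂ hcomp
    set b' := max a₂ (mn s) with hb'def
    have hb'1 : a₂ ≤ b' := le_max_left _ _
    have hb'2 : b' ≤ b₂ := by simp only [hb'def, max_le_iff]; exact ⟨hcomp.1, hmn'⟩
    have hb'mem : b' ∈ Finset.Icc a₂ b₂ := Finset.mem_Icc.2 ⟨hb'1, hb'2⟩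
    refine ⟨b', comp_sub hcomp hb'mem, 
      sameComp_of_Icc_sub (comp_sub hcomp) (Finset.mem_Icc.2 ⟨ha₂, hb₂⟩) hb'mem, ?_⟩
    apply (neighbor_iff hs b').2
    constructor
    · exact le_max_right _ _
    · have := mn_le_mx hs.nonempty
      simp only [hb'def, max_le_iff]; omega

end Cheesy
namespace Cheesy

lemma mem_columnYs {P : Finset Cell} {x y : ℤ} :
    y ∈ columnYs P x ↔ (x, y) ∈ P := by
  simp only [columnYs, Finset.mem_image, Finset.mem_filter]
  constructor
  · rintro ⟨⟨cx, cy⟩, ⟨hc, hcx⟩, hcy⟩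
    simp only at hcx hcy
    rw [← hcx, ← hcy]; exact hc
  · intro h; exact ⟨(x, y), ⟨h, rfl⟩, rfl⟩

lemma hexAdj_symm {a b : Cell} (h : HexAdj a b) : HexAdj b a := by
  simp only [HexAdj, Set.mem_insert_iff, Set.mem_singleton_iff, Prod.mk.injEq] at h ⊢
  rcases h with h|h|h|h|h|h
  · right; left; omega
  · left; omega
  · right; right; right; left; omega
  · right; right; left; omega
  · right; right; right; right; right; omega
  · right; right; right; right; left; omega

lemma hexAdj_fst {a b : Cell} (h : HexAdj a b) : b.1 = a.1 - 1 ∨ b.1 = a.1 ∨ b.1 = a.1 + 1 := by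
  simp only [HexAdj, Set.mem_insert_iff, Set.mem_singleton_iff, Prod.mk.injEq] at h
  rcases h with h|h|h|h|h|h <;> omega

lemma hexAdj_snd {a b : Cell} (h : HexAdj a b) : b.2 = a.2 - 1 ∨ b.2 = a.2 ∨ b.2 = a.2 + 1 := by
  simp only [HexAdj, Set.mem_insert_iff, Set.mem_singleton_iff, Prod.mk.injEq] at h
  rcases h with h|h|h|h|h|h <;> omega

/-- the relation used in IsPolyomino -/
def rel (P : Finset Cell) : Cell → Cell → Prop :=
  fun u v => u ∈ P ∧ v ∈ P ∧ HexAdj u v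

lemma rel_symm (P : Finset Cell) : Symmetric (rel P) :=
  fun _ _ h => ⟨h.2.1, h.1, hexAdj_symm h.2.2⟩

lemma rtg_symm {P : Finset Cell} {a b : Cell}
    (h : Relation.ReflTransGen (rel P) a b) : Relation.ReflTransGen (rel P) b a :=
  (@Relation.ReflTransGen.stdSymm _ _ ⟨fun _ _ h' => rel_symm P h'⟩).symm _ _ h

/-- columns met by a path are nonempty -/
lemma walk_cols {P : Finset Cell} {a b : Cell} (ha : a ∈ P)
    (h : Relation.ReflTransGen (rel P) a b) :
    ∀ x : ℤ, ((a.1 ≤ x ∧ x ≤ b.1) ∨ (b.1 ≤ x ∧ x ≤ a.1)) → (columnYs P x).Nonempty := by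
  induction h with
  | refl => intro x hx
            have : x = a.1 := by omega
            exact ⟨a.2, mem_columnYs.2 (by rw [this]; exact ha)⟩
  | tail hbc hcd ih =>
    rename_i b' c'
    intro x hx
    have hstep := hexAdj_fst hcd.2.2
    by_cases hx' : (a.1 ≤ x ∧ x ≤ b'.1) ∨ (b'.1 ≤ x ∧ x ≤ a.1)
    · exact ih x hx'
    · have hxc : x = c'.1 := by omega
      subst hxc
      exact ⟨c'.2, mem_columnYs.2 hcd.2.1⟩

/-- rows met by a path are nonempty -/
lemma walk_rows {P : Finset Cell} {a b : Cell} (ha : a ∈ P)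
    (h : Relation.ReflTransGen (rel P) a b) :
    ∀ y : ℤ, ((a.2 ≤ y ∧ y ≤ b.2) ∨ (b.2 ≤ y ∧ y ≤ a.2)) → ∃ c ∈ P, c.2 = y := by
  induction h with
  | refl => intro y hy
            have : y = a.2 := by omega
            exact ⟨a, ha, this.symm⟩
  | tail hbc hcd ih =>
    rename_i b' c'
    intro y hy
    have hstep := hexAdj_snd hcd.2.2
    by_cases hy' : (a.2 ≤ y ∧ y ≤ b'.2) ∨ (b'.2 ≤ y ∧ y ≤ a.2)
    · exact ih y hy'
    · have : y = c'.2 := by omega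
      exact ⟨c', hcd.2.1, this.symm⟩

/-- vertical path inside a column -/
lemma vert_path {P : Finset Cell} {x a b : ℤ} (hsub : Finset.Icc a b ⊆ columnYs P x) :
    ∀ y ∈ Finset.Icc a b, ∀ z ∈ Finset.Icc a b,
      Relation.ReflTransGen (rel P) (x, y) (x, z) := by
  -- first the case y ≤ z
  have key : ∀ y ∈ Finset.Icc a b, ∀ z ∈ Finset.Icc a b, y ≤ z →
      Relation.ReflTransGen (rel P) (x, y) (x, z) := by
    intro y hy z hz hyz
    rw [Finset.mem_Icc] at hy hz
    obtain ⟨k, hk⟩ : ∃ k : ℕ, z - y = k := ⟨(z-y).toNat, by omega⟩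
    induction k generalizing z with
    | zero => have : z = y := by omega
              rw [this]
    | succ n ih =>
      have h1 : Relation.ReflTransGen (rel P) (x, y) (x, z - 1) :=
        ih (z - 1) ⟨by omega, by omega⟩ (by omega) (by omega)
      refine h1.tail ⟨mem_columnYs.1 (hsub (Finset.mem_Icc.2 (by omega))),
        mem_columnYs.1 (hsub (Finset.mem_Icc.2 (by omega))), ?_⟩
      simp only [HexAdj, Set.mem_insert_iff, Set.mem_singleton_iff, Prod.mk.injEq]
      right; right; left; omega
  intro y hy z hz
  rcases le_or_gt y z with h | h
  · exact key y hy z hz h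
  · exact rtg_symm (key z hz y hy (by omega))

/-- from a cell of column x+1, reach some cell of column x (given Attach). -/
lemma step_left {P : Finset Cell} {x : ℤ}
    (hs : ColOK (columnYs P x)) (ht : ColOK (columnYs P (x+1)))
    (hat : Attach (columnYs P x) (columnYs P (x+1))) :
    ∀ y ∈ columnYs P (x+1), ∃ c ∈ columnYs P x,
      Relation.ReflTransGen (rel P) (x+1, y) (x, c) := by
  intro y hy
  obtain ⟨a₂, b₂, hcomp, ha₂, hb₂⟩ := mem_comp ht hy
  obtain ⟨hmx', hmn'⟩ := hat a₂ b₂ hcomp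
  set s := columnYs P x
  set b' := max a₂ (mn s) with hb'def
  have hb'1 : a₂ ≤ b' := le_max_left _ _
  have hb'2 : b' ≤ b₂ := by simp only [hb'def, max_le_iff]; exact ⟨hcomp.1, hmn'⟩
  have hpath : Relation.ReflTransGen (rel P) (x+1, y) (x+1, b') :=
    vert_path (comp_sub hcomp) y (Finset.mem_Icc.2 ⟨ha₂, hb₂⟩)
      b' (Finset.mem_Icc.2 ⟨hb'1, hb'2⟩)
  obtain ⟨c, hc, hbc⟩ : ∃ c ∈ s, b' = c ∨ b' = c + 1 := by
    apply (neighbor_iff hs b').2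
    have := mn_le_mx hs.nonempty
    constructor
    · exact le_max_right _ _
    · simp only [hb'def, max_le_iff]; omega
  refine ⟨c, hc, hpath.tail ?_⟩
  refine ⟨mem_columnYs.1 (comp_sub hcomp (Finset.mem_Icc.2 ⟨hb'1, hb'2⟩)),
    mem_columnYs.1 hc, hexAdj_symm ?_⟩
  rw [hexAdj_iff]; tauto

/-- structural description of a level-1 cheesy polyomino of width w. -/
def Struct (P : Finset Cell) (w : ℕ) : Prop :=
  1 ≤ w ∧
  (∀ x : ℤ, 0 ≤ x → x < (w:ℤ) → ColOK (columnYs P x)) ∧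
  (∀ x : ℤ, (x < 0 ∨ (w:ℤ) ≤ x) → columnYs P x = ∅) ∧
  (∃ a b : ℤ, a ≤ b ∧ columnYs P 0 = Finset.Icc a b) ∧
  (∀ x : ℤ, 0 ≤ x → x + 1 < (w:ℤ) → Attach (columnYs P x) (columnYs P (x+1)))

/-- normalization in the y direction only -/
def NormY (P : Finset Cell) : Prop := (∀ c ∈ P, 0 ≤ c.2) ∧ (∃ c ∈ P, c.2 = 0)

lemma struct_connected {P : Finset Cell} {w : ℕ} (hS : Struct P w) :
    IsPolyomino P := by
  obtain ⟨hw, hcols, hempty, ⟨a0, b0, hab0, hcol0⟩, hatt⟩ := hS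
  have hcol0ne : (columnYs P 0).Nonempty := by
    rw [hcol0]; exact ⟨a0, Finset.mem_Icc.2 ⟨le_rfl, hab0⟩⟩
  set base : Cell := (0, a0) with hbase
  have hbaseP : base ∈ P := by
    apply mem_columnYs.1; rw [hcol0]; exact Finset.mem_Icc.2 ⟨le_rfl, hab0⟩
  have main : ∀ k : ℕ, ∀ y : ℤ, y ∈ columnYs P (k : ℤ) →
      Relation.ReflTransGen (rel P) ((k : ℤ), y) base := by
    intro k
    induction k with
    | zero =>
      intro y hy
      simp only [Nat.cast_zero] at hy ⊢
      rw [hcol0] at hy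
      exact vert_path (by rw [hcol0]) y hy a0 (Finset.mem_Icc.2 ⟨le_rfl, hab0⟩)
    | succ n ih =>
      intro y hy
      have hk1 : ((n + 1 : ℕ) : ℤ) = (n : ℤ) + 1 := by push_cast; ring
      rw [hk1] at hy ⊢
      have hrange : (n : ℤ) + 1 < (w : ℤ) := by
        by_contra hc
        have := hempty ((n:ℤ)+1) (Or.inr (by omega))
        rw [this] at hy; exact absurd hy (Finset.notMem_empty _)
      have hsOK : ColOK (columnYs P (n:ℤ)) := hcols _ (by positivity) (by omega)
      have htOK : ColOK (columnYs P ((n:ℤ)+1)) := hcols _ (by positivity) (by omega)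
      obtain ⟨c, hc, hpath⟩ := step_left hsOK htOK (hatt _ (by positivity) hrange) y hy
      exact hpath.trans (ih c hc)
  constructor
  · exact ⟨base, hbaseP⟩
  · intro u hu v hv
    have hucol : u.2 ∈ columnYs P u.1 := mem_columnYs.2 hu
    have hvcol : v.2 ∈ columnYs P v.1 := mem_columnYs.2 hv
    have hux : 0 ≤ u.1 := by
      by_contra hc
      rw [hempty u.1 (Or.inl (by omega))] at hucol
      exact absurd hucol (Finset.notMem_empty _)
    have hvx : 0 ≤ v.1 := by
      by_contra hc
      rw [hempty v.1 (Or.inl (by omega))] at hvcol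
      exact absurd hvcol (Finset.notMem_empty _)
    have hcastu : ((u.1.toNat : ℤ)) = u.1 := Int.toNat_of_nonneg hux
    have hcastv : ((v.1.toNat : ℤ)) = v.1 := Int.toNat_of_nonneg hvx
    have h1 : Relation.ReflTransGen (rel P) (u.1, u.2) base := by
      have := main u.1.toNat u.2 (by rw [hcastu]; exact hucol)
      rwa [hcastu] at this
    have h2 : Relation.ReflTransGen (rel P) (v.1, v.2) base := by
      have := main v.1.toNat v.2 (by rw [hcastv]; exact hvcol)
      rwa [hcastv] at this
    exact h1.trans (rtg_symm h2)
  
end Cheesy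
namespace Cheesy

lemma numComponents_empty : numComponents (∅ : Finset ℤ) = 0 := by
  simp [numComponents]

lemma struct_cheesy {P : Finset Cell} {w : ℕ} (hS : Struct P w) (hN : NormY P) :
    IsCheesy 1 P ∧ Normalized P := by
  obtain ⟨hw, hcols, hempty, ⟨a0, b0, hab0, hcol0⟩, hatt⟩ := hS
  have hpoly : IsPolyomino P := struct_connected ⟨hw, hcols, hempty, ⟨a0, b0, hab0, hcol0⟩, hatt⟩
  have hrange : ∀ x : ℤ, (columnYs P x).Nonempty → 0 ≤ x ∧ x < (w:ℤ) := by
    intro x hx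
    by_contra hc
    rw [hempty x (by omega)] at hx
    exact Finset.notMem_empty _ hx.choose_spec
  refine ⟨⟨hpoly, ⟨?_, ?_⟩, ?_⟩, ?_, ?_, ?_⟩
  · -- first RSD condition
    intro x hx hleft
    obtain ⟨hx0, hxw⟩ := hrange x hx
    have hxeq : x = 0 := by
      by_contra hc
      have h1 : ColOK (columnYs P (x-1)) := hcols (x-1) (by omega) (by omega)
      rw [hleft (x-1) (by omega)] at h1
      exact absurd h1.nonempty (by simp)
    rw [hxeq, hcol0]
    exact numComponents_Icc hab0
  · -- second RSD condition
    intro x hx hx1 b hb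
    obtain ⟨hx0, hxw⟩ := hrange x hx
    obtain ⟨_, hx1w⟩ := hrange (x+1) hx1
    have hsOK := hcols x hx0 (by omega)
    have htOK := hcols (x+1) (by omega) hx1w
    have hRSD : RSDpair (columnYs P x) (columnYs P (x+1)) :=
      (rsdpair_iff_attach hsOK htOK).2 (hatt x hx0 hx1w)
    obtain ⟨b', hb', hsc, c, hc, hbc⟩ := hRSD b hb
    exact ⟨b', hb', hsc, c, hc, hexAdj_iff.2 hbc⟩
  · -- column conditions
    intro x
    rcases Finset.eq_empty_or_nonempty (columnYs P x) with he | hne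
    · rw [he, numComponents_empty]; exact ⟨by omega, by omega⟩
    · obtain ⟨hx0, hxw⟩ := hrange x hne
      rcases hcols x hx0 hxw with ⟨a, b, hab, heq⟩ | ⟨a, b, c, hab, hbc, heq⟩
      · rw [heq, numComponents_Icc hab]; exact ⟨by omega, by omega⟩
      · rw [heq, numComponents_two hab hbc, gapSize_two hab hbc]
        exact ⟨le_rfl, fun _ => le_rfl⟩
  · -- coordinates nonnegative
    intro c hc
    refine ⟨?_, hN.1 c hc⟩
    have : c.2 ∈ columnYs P c.1 := mem_columnYs.2 hc
    exact (hrange c.1 ⟨c.2, this⟩).1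
  · -- some cell with x = 0
    have : a0 ∈ columnYs P 0 := by rw [hcol0]; exact Finset.mem_Icc.2 ⟨le_rfl, hab0⟩
    exact ⟨(0, a0), mem_columnYs.1 this, rfl⟩
  · exact hN.2

lemma maxX_eq_mx (P : Finset Cell) : maxX P = mx (P.image Prod.fst) := rfl

lemma le_maxX {P : Finset Cell} {c : Cell} (hc : c ∈ P) : c.1 ≤ maxX P := by
  rw [maxX_eq_mx]; exact le_mx (Finset.mem_image_of_mem _ hc)

lemma exists_maxX {P : Finset Cell} (hP : P.Nonempty) : ∃ c ∈ P, c.1 = maxX P := by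
  rw [maxX_eq_mx]
  have : mx (P.image Prod.fst) ∈ P.image Prod.fst := mx_mem (hP.image _)
  obtain ⟨c, hc, hceq⟩ := Finset.mem_image.1 this
  exact ⟨c, hc, hceq⟩

lemma cheesy_struct {P : Finset Cell} (hC : IsCheesy 1 P) (hN : Normalized P) :
    Struct P ((maxX P).toNat + 1) ∧ NormY P ∧ 0 ≤ maxX P := by
  obtain ⟨hpoly, ⟨hRSD1, hRSD2⟩, hcolcond⟩ := hC
  obtain ⟨hnn, ⟨cx, hcx, hcx0⟩, ⟨cy, hcy, hcy0⟩⟩ := hN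
  have hx0ne : (columnYs P 0).Nonempty :=
    ⟨cx.2, mem_columnYs.2 (by rw [← hcx0]; exact hcx)⟩
  have hmax0 : 0 ≤ maxX P := by
    have := le_maxX hcx; omega
  obtain ⟨cm, hcm, hcmx⟩ := exists_maxX hpoly.1
  -- columns in [0, maxX] are nonempty
  have hconn : ∀ x : ℤ, 0 ≤ x → x ≤ maxX P → (columnYs P x).Nonempty := by
    intro x h0 h1
    have hpath := hpoly.2 (cx.1, cx.2) (by exact hcx) (cm.1, cm.2) (by exact hcm)
    exact walk_cols (by exact hcx) hpath x (by left; constructor <;> simp only [] <;> omega)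
  have hemp : ∀ x : ℤ, (x < 0 ∨ maxX P + 1 ≤ x) → columnYs P x = ∅ := by
    intro x hx
    rw [Finset.eq_empty_iff_forall_notMem]
    intro y hy
    have hyP := mem_columnYs.1 hy
    have h1 := (hnn _ hyP).1
    have h2 := le_maxX hyP
    simp only at h1 h2
    omega
  have hcast : (((maxX P).toNat + 1 : ℕ) : ℤ) = maxX P + 1 := by
    push_cast; omega
  have hcolsOK : ∀ x : ℤ, 0 ≤ x → x < ((((maxX P).toNat + 1 : ℕ)) : ℤ) →
      ColOK (columnYs P x) := by
    intro x h0 h1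
    rw [hcast] at h1
    exact colOK_of (hconn x h0 (by omega)) (hcolcond x).1 (hcolcond x).2
  refine ⟨⟨by omega, hcolsOK, ?_, ?_, ?_⟩, ⟨fun c hc => (hnn c hc).2, ⟨cy, hcy, hcy0⟩⟩, hmax0⟩
  · intro x hx; rw [hcast] at hx; exact hemp x (by omega)
  · -- first column is an interval
    have h1 : numComponents (columnYs P 0) = 1 := by
      apply hRSD1 0 hx0ne
      intro x' hx'
      exact hemp x' (by omega)
    exact ⟨mn _, mx _, mn_le_mx hx0ne, eq_Icc_of_one hx0ne h1⟩
  · -- attach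
    intro x h0 h1
    rw [hcast] at h1
    have hsne := hconn x h0 (by omega)
    have htne := hconn (x+1) (by omega) (by omega)
    have hsOK := hcolsOK x h0 (by rw [hcast]; omega)
    have htOK := hcolsOK (x+1) (by omega) (by rw [hcast]; omega)
    apply (rsdpair_iff_attach hsOK htOK).1
    intro b hb
    obtain ⟨b', hb', hsc, c, hc, hadj⟩ := hRSD2 x hsne htne b hb
    exact ⟨b', hb', hsc, c, hc, hexAdj_iff.1 hadj⟩

lemma struct_maxX {P : Finset Cell} {w : ℕ} (hS : Struct P w) :
    maxX P = (w : ℤ) - 1 := by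
  obtain ⟨hw, hcols, hempty, _, _⟩ := hS
  have hne : (columnYs P ((w:ℤ) - 1)).Nonempty :=
    (hcols ((w:ℤ)-1) (by omega) (by omega)).nonempty
  obtain ⟨y, hy⟩ := hne
  have hyP := mem_columnYs.1 hy
  apply le_antisymm
  · by_contra hc
    push_neg at hc
    obtain ⟨cm, hcm, hcmx⟩ := exists_maxX ⟨_, hyP⟩
    have : columnYs P cm.1 = ∅ := hempty _ (by omega)
    have hmem : cm.2 ∈ columnYs P cm.1 := mem_columnYs.2 hcm
    rw [this] at hmem
    exact absurd hmem (Finset.notMem_empty _)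
  · have := le_maxX hyP; simp only at this; omega

end Cheesy
namespace Cheesy

/-- candidate single-interval new columns of `a` cells attachable to `[m,M]`. -/
def att1 (a m M : ℤ) : Finset (Finset ℤ) :=
  (Finset.Icc (m - a + 1) (M + 1)).image fun α => Finset.Icc α (α + a - 1)

/-- candidate two-interval new columns of `a` cells attachable to `[m,M]`. -/
def att2 (a m M : ℤ) : Finset (Finset ℤ) :=
  (Finset.Icc (1:ℤ) (a - 1)).biUnion fun k =>
    (Finset.Icc (m - k + 1) (M - k)).image fun α =>
      Finset.Icc α (α + k - 1) ∪ Finset.Icc (α + k + 1) (α + a)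

def att (a m M : ℤ) : Finset (Finset ℤ) := att1 a m M ∪ att2 a m M

lemma heightN_eq (s : Finset ℤ) : heightN s = (mx s - mn s + 1).toNat := rfl

lemma heightN_Icc {a b : ℤ} (h : a ≤ b) : (heightN (Finset.Icc a b) : ℤ) = b - a + 1 := by
  rw [heightN_eq, mn_Icc h, mx_Icc h]; omega

lemma heightN_two {a b c : ℤ} (h1 : a ≤ b) (h2 : b + 2 ≤ c) :
    (heightN (Finset.Icc a b ∪ Finset.Icc (b+2) c) : ℤ) = c - a + 1 := by
  rw [heightN_eq, mn_two h1 h2, mx_two h1 h2]; omega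

lemma mem_att1 {s : Finset ℤ} {a m M : ℤ} :
    s ∈ att1 a m M ↔ ∃ α, m - a + 1 ≤ α ∧ α ≤ M + 1 ∧ s = Finset.Icc α (α + a - 1) := by
  simp only [att1, Finset.mem_image, Finset.mem_Icc]
  constructor
  · rintro ⟨α, ⟨h1, h2⟩, rfl⟩; exact ⟨α, h1, h2, rfl⟩
  · rintro ⟨α, h1, h2, rfl⟩; exact ⟨α, ⟨h1, h2⟩, rfl⟩

lemma mem_att2 {s : Finset ℤ} {a m M : ℤ} :
    s ∈ att2 a m M ↔ ∃ k α, 1 ≤ k ∧ k ≤ a - 1 ∧ m - k + 1 ≤ α ∧ α ≤ M - k ∧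
      s = Finset.Icc α (α + k - 1) ∪ Finset.Icc (α + k + 1) (α + a) := by
  simp only [att2, Finset.mem_biUnion, Finset.mem_image, Finset.mem_Icc]
  constructor
  · rintro ⟨k, ⟨h1, h2⟩, α, ⟨h3, h4⟩, rfl⟩; exact ⟨k, α, h1, h2, h3, h4, rfl⟩
  · rintro ⟨k, α, h1, h2, h3, h4, rfl⟩; exact ⟨k, ⟨h1, h2⟩, α, ⟨h3, h4⟩, rfl⟩

/-- main characterization: legal next columns over a column spanning [m, M]. -/
lemma mem_att_iff {s : Finset ℤ} {a m M : ℤ} (ha : 1 ≤ a) (hmM : m ≤ M) :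
    s ∈ att a m M ↔ ((s.card : ℤ) = a ∧ ColOK s ∧
      ∀ u v : ℤ, IsComp s u v → u ≤ M + 1 ∧ m ≤ v) := by
  constructor
  · intro hs
    rcases Finset.mem_union.1 hs with h1 | h2
    · obtain ⟨α, hα1, hα2, rfl⟩ := mem_att1.1 h1
      refine ⟨?_, Or.inl ⟨α, α + a - 1, by omega, rfl⟩, ?_⟩
      · rw [Int.card_Icc]; omega
      · intro u v hc
        rw [isComp_Icc (by omega)] at hc
        omega
    · obtain ⟨k, α, hk1, hk2, hα1, hα2, rfl⟩ := mem_att2.1 h2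
      refine ⟨?_, Or.inr ⟨α, α + k - 1, α + a, by omega, by omega, by ring_nf⟩, ?_⟩
      · rw [Finset.card_union_of_disjoint, Int.card_Icc, Int.card_Icc]
        · push_cast; omega
        · rw [Finset.disjoint_left]
          intro x hx1 hx2
          rw [Finset.mem_Icc] at hx1 hx2
          omega
      · intro u v hc
        rw [show α + k + 1 = (α + k - 1) + 2 by ring] at hc
        rw [isComp_two (by omega) (by omega)] at hc
        rcases hc with ⟨rfl, rfl⟩ | ⟨rfl, rfl⟩ <;> omega
  · rintro ⟨hcard, hok, hcomp⟩
    rcases hok with ⟨α, β, hαβ, rfl⟩ | ⟨α, β, γ, hαβ, hβγ, rfl⟩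
    · have hcard' := hcard
      rw [Int.card_Icc] at hcard'
      have hβ : β = α + a - 1 := by omega
      subst hβ
      obtain ⟨h1, h2⟩ := hcomp α (α + a - 1) ((isComp_Icc (by omega)).2 ⟨rfl, rfl⟩)
      exact Finset.mem_union.2 (Or.inl (mem_att1.2 ⟨α, by omega, by omega, rfl⟩))
    · have hcard' := hcard
      rw [Finset.card_union_of_disjoint (by
            rw [Finset.disjoint_left]
            intro x hx1 hx2
            rw [Finset.mem_Icc] at hx1 hx2
            omega), Int.card_Icc, Int.card_Icc] at hcard'
      push_cast at hcard'
      obtain ⟨hu1, hu2⟩ := hcomp α β ((isComp_two hαβ hβγ).2 (Or.inl ⟨rfl, rfl⟩))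
      obtain ⟨hl1, hl2⟩ := hcomp (β+2) γ ((isComp_two hαβ hβγ).2 (Or.inr ⟨rfl, rfl⟩))
      apply Finset.mem_union.2
      apply Or.inr
      apply mem_att2.2
      refine ⟨β - α + 1, α, by omega, by omega, by omega, by omega, ?_⟩
      congr 1
      · congr 1; omega
      · congr 1 <;> omega

lemma card_att1 {a m M : ℤ} (ha : 1 ≤ a) (hmM : m ≤ M) :
    ((att1 a m M).card : ℤ) = M - m + a + 1 := by
  rw [att1, Finset.card_image_of_injOn, Int.card_Icc]
  · omega
  · intro α _ β _ h
    have h' : Finset.Icc α (α + a - 1) = Finset.Icc β (β + a - 1) := h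
    have e1 : mn (Finset.Icc α (α + a - 1)) = α := mn_Icc (by omega)
    have e2 : mn (Finset.Icc β (β + a - 1)) = β := mn_Icc (by omega)
    rw [h'] at e1; omega

lemma att2_inner_inj {a m M k : ℤ} (hk1 : 1 ≤ k) (hk2 : k ≤ a - 1) :
    ∀ α ∈ Finset.Icc (m - k + 1) (M - k), ∀ β ∈ Finset.Icc (m - k + 1) (M - k),
      Finset.Icc α (α + k - 1) ∪ Finset.Icc (α + k + 1) (α + a) =
      Finset.Icc β (β + k - 1) ∪ Finset.Icc (β + k + 1) (β + a) → α = β := by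
  intro α _ β _ h
  have e1 : mn (Finset.Icc α (α + k - 1) ∪ Finset.Icc ((α + k - 1) + 2) (α + a)) = α :=
    mn_two (by omega) (by omega)
  have e2 : mn (Finset.Icc β (β + k - 1) ∪ Finset.Icc ((β + k - 1) + 2) (β + a)) = β :=
    mn_two (by omega) (by omega)
  rw [show (α + k - 1) + 2 = α + k + 1 by ring] at e1
  rw [show (β + k - 1) + 2 = β + k + 1 by ring] at e2
  rw [h] at e1; omega

lemma card_att2 {a m M : ℤ} (hmM : m ≤ M) :
    ((att2 a m M).card : ℤ) = (a - 1).toNat * (M - m) := by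
  rw [att2, Finset.card_biUnion]
  · have hval : ∀ k ∈ Finset.Icc (1:ℤ) (a - 1),
        ((Finset.Icc (m - k + 1) (M - k)).image fun α =>
          Finset.Icc α (α + k - 1) ∪ Finset.Icc (α + k + 1) (α + a)).card
        = (M - m).toNat := by
      intro k hk
      rw [Finset.mem_Icc] at hk
      rw [Finset.card_image_of_injOn (fun α hα β hβ h =>
        att2_inner_inj hk.1 hk.2 α hα β hβ h), Int.card_Icc]
      congr 1; omega
    rw [Finset.sum_congr rfl hval, Finset.sum_const, Int.card_Icc, smul_eq_mul]
    push_cast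
    have h1 : (a - 1 + 1 - 1).toNat = (a - 1).toNat := by congr 1; ring
    rw [h1]
    have h2 : ((M - m).toNat : ℤ) = M - m := by omega
    rw [h2]
  · intro k hk k' hk' hne
    rw [Finset.mem_coe, Finset.mem_Icc] at hk hk'
    rw [Function.onFun, Finset.disjoint_left]
    intro s hs1 hs2
    rw [Finset.mem_image] at hs1 hs2
    obtain ⟨α, hα, rfl⟩ := hs1
    obtain ⟨β, hβ, heq⟩ := hs2
    rw [Finset.mem_Icc] at hα hβ
    have e1 : mn (Finset.Icc α (α + k - 1) ∪ Finset.Icc ((α + k - 1) + 2) (α + a)) = α :=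
      mn_two (by omega) (by omega)
    have e2 : mn (Finset.Icc β (β + k' - 1) ∪ Finset.Icc ((β + k' - 1) + 2) (β + a)) = β :=
      mn_two (by omega) (by omega)
    rw [show (α + k - 1) + 2 = α + k + 1 by ring] at e1
    rw [show (β + k' - 1) + 2 = β + k' + 1 by ring] at e2
    rw [heq] at e2
    have hab : α = β := by omega
    subst hab
    -- α + k is in the k'-set but not in the k-set
    have hmem : α + k ∈ Finset.Icc α (α + k' - 1) ∪ Finset.Icc (α + k' + 1) (α + a) := by
      simp only [Finset.mem_union, Finset.mem_Icc]
      omega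
    rw [heq] at hmem
    simp only [Finset.mem_union, Finset.mem_Icc] at hmem
    omega

lemma att_disj {a m M : ℤ} (ha : 1 ≤ a) : Disjoint (att1 a m M) (att2 a m M) := by
  rw [Finset.disjoint_left]
  intro s h1 h2
  obtain ⟨α, hα1, hα2, rfl⟩ := mem_att1.1 h1
  obtain ⟨k, β, hk1, hk2, hβ1, hβ2, heq⟩ := mem_att2.1 h2
  rw [show β + k + 1 = (β + k - 1) + 2 by ring] at heq
  have e2 : mx (Finset.Icc β (β + k - 1) ∪ Finset.Icc ((β + k - 1) + 2) (β + a)) = β + a :=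
    mx_two (by omega) (by omega)
  have e2' : mn (Finset.Icc β (β + k - 1) ∪ Finset.Icc ((β + k - 1) + 2) (β + a)) = β :=
    mn_two (by omega) (by omega)
  rw [← heq] at e2 e2'
  have e1 : mx (Finset.Icc α (α + a - 1)) = α + a - 1 := mx_Icc (by omega)
  have e1' : mn (Finset.Icc α (α + a - 1)) = α := mn_Icc (by omega)
  omega

lemma card_att {a m M : ℤ} (ha : 1 ≤ a) (hmM : m ≤ M) :
    ((att a m M).card : ℤ) = a * (M - m + 1) + 1 := by
  rw [att, Finset.card_union_of_disjoint (att_disj ha)]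
  push_cast
  rw [card_att1 ha hmM, card_att2 hmM]
  have : ((a-1).toNat : ℤ) = a - 1 := by omega
  push_cast
  rw [this]; ring

lemma sum_heightN_att {a m M : ℤ} (ha : 1 ≤ a) (hmM : m ≤ M) :
    (∑ s ∈ att a m M, (heightN s : ℤ)) = (a^2 + a - 1) * (M - m + 1) + 1 := by
  rw [att, Finset.sum_union (att_disj ha)]
  have h1 : (∑ s ∈ att1 a m M, (heightN s : ℤ)) = ((att1 a m M).card : ℤ) * a := by
    have hval : ∀ s ∈ att1 a m M, ((heightN s : ℤ)) = a := by
      intro s hs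
      obtain ⟨α, _, _, rfl⟩ := mem_att1.1 hs
      rw [heightN_Icc (by omega)]; ring
    rw [Finset.sum_congr rfl hval, Finset.sum_const, nsmul_eq_mul]
  have h2 : (∑ s ∈ att2 a m M, (heightN s : ℤ)) = ((att2 a m M).card : ℤ) * (a + 1) := by
    have hval : ∀ s ∈ att2 a m M, ((heightN s : ℤ)) = a + 1 := by
      intro s hs
      obtain ⟨k, α, hk1, hk2, _, _, rfl⟩ := mem_att2.1 hs
      rw [show α + k + 1 = (α + k - 1) + 2 by ring, heightN_two (by omega) (by omega)]
      ring
    rw [Finset.sum_congr rfl hval, Finset.sum_const, nsmul_eq_mul]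
  rw [h1, h2, card_att1 ha hmM, card_att2 hmM]
  have : ((a-1).toNat : ℤ) = a - 1 := by omega
  rw [this]; ring

end Cheesy
namespace Cheesy

lemma mem_image_add {s : Finset ℤ} {d y : ℤ} :
    y ∈ s.image (· + d) ↔ y - d ∈ s := by
  simp only [Finset.mem_image]
  constructor
  · rintro ⟨z, hz, rfl⟩; simpa using hz
  · intro h; exact ⟨y - d, h, by ring⟩

lemma image_add_Icc (a b d : ℤ) :
    (Finset.Icc a b).image (· + d) = Finset.Icc (a + d) (b + d) := by
  ext z
  rw [mem_image_add]
  simp only [Finset.mem_Icc]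
  omega

lemma image_add_nonempty {s : Finset ℤ} {d : ℤ} (hs : s.Nonempty) :
    (s.image (· + d)).Nonempty := hs.image _

lemma card_image_add (s : Finset ℤ) (d : ℤ) : (s.image (· + d)).card = s.card :=
  Finset.card_image_of_injective _ (fun x y h => by omega)

lemma mn_image_add {s : Finset ℤ} (d : ℤ) (hs : s.Nonempty) :
    mn (s.image (· + d)) = mn s + d := by
  apply mn_unique
  · exact Finset.mem_image_of_mem _ (mn_mem hs)
  · intro x hx
    rw [mem_image_add] at hx
    have := mn_le hx; omega

lemma mx_image_add {s : Finset ℤ} (d : ℤ) (hs : s.Nonempty) :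
    mx (s.image (· + d)) = mx s + d := by
  apply mx_unique
  · exact Finset.mem_image_of_mem _ (mx_mem hs)
  · intro x hx
    rw [mem_image_add] at hx
    have := le_mx hx; omega

lemma heightN_image_add {s : Finset ℤ} (d : ℤ) (hs : s.Nonempty) :
    heightN (s.image (· + d)) = heightN s := by
  rw [heightN_eq, heightN_eq, mn_image_add d hs, mx_image_add d hs]
  congr 1; ring

lemma colOK_image_add {s : Finset ℤ} {d : ℤ} (h : ColOK s) :
    ColOK (s.image (· + d)) := by
  rcases h with ⟨a, b, hab, rfl⟩ | ⟨a, b, c, hab, hbc, rfl⟩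
  · exact Or.inl ⟨a + d, b + d, by omega, image_add_Icc a b d⟩
  · refine Or.inr ⟨a + d, b + d, c + d, by omega, by omega, ?_⟩
    rw [Finset.image_union, image_add_Icc, image_add_Icc]
    congr 2
    omega

lemma isComp_image_add {s : Finset ℤ} {d u v : ℤ} :
    IsComp (s.image (· + d)) u v ↔ IsComp s (u - d) (v - d) := by
  unfold IsComp
  rw [mem_image_add, mem_image_add]
  constructor
  · rintro ⟨h1, h2, h3, h4⟩
    refine ⟨by omega, fun x hx => ?_, by rwa [show u - 1 - d = u - d - 1 by ring] at h3,
      by rwa [show v + 1 - d = v - d + 1 by ring] at h4⟩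
    rw [Finset.mem_Icc] at hx
    have : x + d ∈ Finset.Icc u v := Finset.mem_Icc.2 (by omega)
    have := h2 this
    rw [mem_image_add] at this
    simpa using this
  · rintro ⟨h1, h2, h3, h4⟩
    refine ⟨by omega, fun x hx => ?_, by rwa [show u - 1 - d = u - d - 1 by ring],
      by rwa [show v + 1 - d = v - d + 1 by ring]⟩
    rw [Finset.mem_Icc] at hx
    rw [mem_image_add]
    exact h2 (Finset.mem_Icc.2 (by omega))

lemma attach_image_add {s t : Finset ℤ} {d : ℤ} (hs : s.Nonempty) (h : Attach s t) :
    Attach (s.image (· + d)) (t.image (· + d)) := by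
  intro u v hc
  rw [isComp_image_add] at hc
  obtain ⟨h1, h2⟩ := h _ _ hc
  rw [mn_image_add d hs, mx_image_add d hs]
  omega

def shiftP (d : ℤ) (P : Finset Cell) : Finset Cell := P.image fun c => (c.1, c.2 + d)
def newcol (x : ℤ) (s : Finset ℤ) : Finset Cell := s.image fun y => (x, y)

lemma mem_shiftP {P : Finset Cell} {d : ℤ} {c : Cell} :
    c ∈ shiftP d P ↔ (c.1, c.2 - d) ∈ P := by
  simp only [shiftP, Finset.mem_image]
  constructor
  · rintro ⟨u, hu, rfl⟩; simpa using hu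
  · intro h; exact ⟨(c.1, c.2 - d), h, by simp⟩

lemma mem_newcol {x : ℤ} {s : Finset ℤ} {c : Cell} :
    c ∈ newcol x s ↔ c.1 = x ∧ c.2 ∈ s := by
  simp only [newcol, Finset.mem_image]
  constructor
  · rintro ⟨y, hy, rfl⟩; exact ⟨rfl, hy⟩
  · rintro ⟨h1, h2⟩
    exact ⟨c.2, h2, by rw [← h1]⟩

lemma columnYs_union (P Q : Finset Cell) (x : ℤ) :
    columnYs (P ∪ Q) x = columnYs P x ∪ columnYs Q x := by
  ext y
  simp only [mem_columnYs, Finset.mem_union]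

lemma columnYs_shiftP (P : Finset Cell) (d x : ℤ) :
    columnYs (shiftP d P) x = (columnYs P x).image (· + d) := by
  ext y
  rw [mem_columnYs, mem_shiftP, mem_image_add, mem_columnYs]

lemma columnYs_newcol_self (x : ℤ) (s : Finset ℤ) : columnYs (newcol x s) x = s := by
  ext y
  rw [mem_columnYs, mem_newcol]
  simp

lemma columnYs_newcol_ne {x x' : ℤ} (h : x' ≠ x) (s : Finset ℤ) :
    columnYs (newcol x s) x' = ∅ := by
  ext y
  rw [mem_columnYs, mem_newcol]
  simp [h]

lemma card_shiftP (d : ℤ) (P : Finset Cell) : (shiftP d P).card = P.card :=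
  Finset.card_image_of_injective _ (fun u v h => by
    simp only [Prod.mk.injEq] at h
    exact Prod.ext h.1 (by omega))

lemma card_newcol (x : ℤ) (s : Finset ℤ) : (newcol x s).card = s.card :=
  Finset.card_image_of_injective _ (fun u v h => by
    simp only [Prod.mk.injEq] at h
    exact h.2)

lemma shiftP_shiftP (d e : ℤ) (P : Finset Cell) :
    shiftP d (shiftP e P) = shiftP (d + e) P := by
  ext c
  rw [mem_shiftP, mem_shiftP, mem_shiftP]
  congr 2
  ring

lemma shiftP_zero (P : Finset Cell) : shiftP 0 P = P := by
  ext c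
  rw [mem_shiftP]
  simp

end Cheesy
namespace Cheesy

/-- all level-1 cheesy normalized polyominoes with n cells, as a finset -/
noncomputable def A (n : ℕ) : Finset (Finset Cell) :=
  @Finset.filter _ (fun P => IsCheesy 1 P ∧ Normalized P ∧ P.card = n)
    (fun _ => Classical.dec _)
    (Finset.Icc ((0:ℤ), (0:ℤ)) ((n:ℤ) - 1, (n:ℤ) - 1)).powerset

lemma bounded_of_cheesy {P : Finset Cell} {n : ℕ} (hC : IsCheesy 1 P)
    (hN : Normalized P) (hcard : P.card = n) :
    ∀ c ∈ P, 0 ≤ c.1 ∧ c.1 ≤ (n:ℤ) - 1 ∧ 0 ≤ c.2 ∧ c.2 ≤ (n:ℤ) - 1 := by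
  intro c hc
  obtain ⟨hS, hNY, hmax0⟩ := cheesy_struct hC hN
  obtain ⟨hw, hcols, hempty, hfirst, hatt⟩ := hS
  have hxc := (hN.1 c hc).1
  have hyc := (hN.1 c hc).2
  have hcast : ((((maxX P).toNat + 1 : ℕ)) : ℤ) = maxX P + 1 := by push_cast; omega
  -- x bound: columns 0..maxX are all nonempty
  have hsubx : Finset.Icc (0:ℤ) (maxX P) ⊆ P.image Prod.fst := by
    intro x hx
    rw [Finset.mem_Icc] at hx
    have := (hcols x hx.1 (by rw [hcast]; omega)).nonempty
    obtain ⟨y, hy⟩ := this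
    exact Finset.mem_image.2 ⟨(x, y), mem_columnYs.1 hy, rfl⟩
  have hxbound : maxX P + 1 ≤ (n:ℤ) := by
    have h1 := Finset.card_le_card hsubx
    have h2 := Finset.card_image_le (f := Prod.fst) (s := P)
    rw [Int.card_Icc] at h1
    omega
  have hcx : c.1 ≤ maxX P := le_maxX hc
  -- y bound: rows 0..c.2 are all nonempty
  obtain ⟨c0, hc0, hc0y⟩ := hN.2.2
  have hpath := hC.1.2 c0 hc0 c hc
  have hrows : ∀ y : ℤ, 0 ≤ y → y ≤ c.2 → ∃ c' ∈ P, c'.2 = y := by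
    intro y h0 h1
    exact walk_rows hc0 hpath y (by omega)
  have hsuby : Finset.Icc (0:ℤ) c.2 ⊆ P.image Prod.snd := by
    intro y hy
    rw [Finset.mem_Icc] at hy
    obtain ⟨c', hc', hc'y⟩ := hrows y hy.1 hy.2
    exact Finset.mem_image.2 ⟨c', hc', hc'y⟩
  have hybound : c.2 + 1 ≤ (n:ℤ) := by
    have h1 := Finset.card_le_card hsuby
    have h2 := Finset.card_image_le (f := Prod.snd) (s := P)
    rw [Int.card_Icc] at h1
    omega
  omega

lemma mem_A_iff {P : Finset Cell} {n : ℕ} :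
    P ∈ A n ↔ IsCheesy 1 P ∧ Normalized P ∧ P.card = n := by
  unfold A
  rw [@Finset.mem_filter _ _ (fun _ => Classical.dec _), Finset.mem_powerset]
  constructor
  · exact fun h => h.2
  · intro h
    refine ⟨fun c hc => ?_, h⟩
    have := bounded_of_cheesy h.1 h.2.1 h.2.2 c hc
    rw [Finset.mem_Icc]
    constructor <;> rw [Prod.le_def] <;> constructor <;> simp only [] <;> omega

lemma cheesyCount_eq_A (n : ℕ) : cheesyCount 1 n = (A n).card := by
  rw [cheesyCount]
  have he : {P : Finset Cell // IsCheesy 1 P ∧ Normalized P ∧ P.card = n} ≃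
      {P : Finset Cell // P ∈ A n} :=
    Equiv.subtypeEquivRight (fun P => mem_A_iff.symm)
  rw [Nat.card_congr he]
  rw [Nat.card_eq_finsetCard]

end Cheesy
namespace Cheesy

def dshift (s : Finset ℤ) : ℤ := max 0 (-(mn s))

def ext (P : Finset Cell) (s : Finset ℤ) : Finset Cell :=
  shiftP (dshift s) P ∪ newcol (maxX P + 1) (s.image (· + dshift s))

lemma image_add_image_add (s : Finset ℤ) (d e : ℤ) :
    (s.image (· + d)).image (· + e) = s.image (· + (d + e)) := by
  ext y
  rw [mem_image_add, mem_image_add, mem_image_add]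
  congr 1
  ring

lemma image_add_zero (s : Finset ℤ) : s.image (· + (0:ℤ)) = s := by
  ext y; rw [mem_image_add]; simp

lemma columnYs_ext (P : Finset Cell) (s : Finset ℤ) (x : ℤ) :
    columnYs (ext P s) x =
      if x = maxX P + 1 then s.image (· + dshift s)
      else (columnYs P x).image (· + dshift s) := by
  rw [ext, columnYs_union, columnYs_shiftP]
  split_ifs with h
  · rw [h, columnYs_newcol_self]
    have : columnYs P (maxX P + 1) = ∅ := by
      rw [Finset.eq_empty_iff_forall_notMem]
      intro y hy
      have := le_maxX (mem_columnYs.1 hy)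
      simp only at this
      omega
    rw [this, Finset.image_empty, Finset.empty_union]
  · rw [columnYs_newcol_ne h, Finset.union_empty]

lemma lastCol_def (P : Finset Cell) : lastCol P = columnYs P (maxX P) := rfl

/-- forward: extending a structured polyomino by a legal new column -/
lemma ext_struct {P : Finset Cell} {s : Finset ℤ} {w : ℕ}
    (hS : Struct P w) (hNY : NormY P) (hsOK : ColOK s)
    (hatt : ∀ u v : ℤ, IsComp s u v → u ≤ mx (lastCol P) + 1 ∧ mn (lastCol P) ≤ v) :
    Struct (ext P s) (w + 1) ∧ NormY (ext P s) ∧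
      maxX (ext P s) = maxX P + 1 ∧
      lastCol (ext P s) = s.image (· + dshift s) ∧
      (ext P s).card = P.card + s.card := by
  obtain ⟨hw, hcols, hempty, ⟨a0, b0, hab0, hcol0⟩, hattP⟩ := hS
  have hmaxX : maxX P = (w : ℤ) - 1 := struct_maxX ⟨hw, hcols, hempty, ⟨a0, b0, hab0, hcol0⟩, hattP⟩
  set d := dshift s with hd
  have hd0 : 0 ≤ d := le_max_left _ _
  have hdmn : 0 ≤ mn s + d := by
    have : -(mn s) ≤ d := le_max_right _ _
    omega
  have hsne := hsOK.nonempty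
  have hlastOK : ColOK (columnYs P (maxX P)) := by
    apply hcols <;> omega
  have hlastne := hlastOK.nonempty
  have hStruct : Struct (ext P s) (w + 1) := by
    refine ⟨by omega, ?_, ?_, ?_, ?_⟩
    · intro x h0 hx
      rw [columnYs_ext]
      split_ifs with h
      · exact colOK_image_add hsOK
      · push_cast at hx
        apply colOK_image_add
        apply hcols x h0
        omega
    · intro x hx
      rw [columnYs_ext]
      push_cast at hx
      split_ifs with h
      · omega
      · rw [hempty x (by omega), Finset.image_empty]
    · refine ⟨a0 + d, b0 + d, by omega, ?_⟩
      rw [columnYs_ext]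
      split_ifs with h
      · omega
      · rw [hcol0, image_add_Icc]
    · intro x h0 hx
      push_cast at hx
      rw [columnYs_ext, columnYs_ext]
      split_ifs with h1 h2
      · omega
      · omega
      · -- x + 1 = maxX P + 1, i.e. the new column attaches to the old last column
        have hxm : x = maxX P := by omega
        subst hxm
        intro u v hc
        rw [isComp_image_add] at hc
        obtain ⟨e1, e2⟩ := hatt _ _ hc
        rw [mn_image_add d hlastne, mx_image_add d hlastne]
        rw [lastCol_def] at e1 e2
        omega
      · -- interior attach
        have hx1 : x + 1 < (w:ℤ) := by omega
        exact attach_image_add (hcols x h0 (by omega)).nonempty (hattP x h0 hx1)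
  refine ⟨hStruct, ?_, ?_, ?_, ?_⟩
  · -- NormY
    constructor
    · intro c hc
      rcases Finset.mem_union.1 hc with h | h
      · rw [mem_shiftP] at h
        have := hNY.1 _ h
        simp only at this
        omega
      · rw [mem_newcol] at h
        have h2 := mem_image_add.1 h.2
        have := mn_le h2
        omega
    · rcases le_or_gt 0 (mn s) with h | h
      · have hdz : d = 0 := by rw [hd, dshift]; omega
        obtain ⟨c, hc, hc0⟩ := hNY.2
        refine ⟨c, Finset.mem_union.2 (Or.inl ?_), hc0⟩
        rw [mem_shiftP, ← hd, hdz]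
        simpa using hc
      · have hdz : d = -(mn s) := by rw [hd, dshift]; omega
        refine ⟨(maxX P + 1, mn s + d), Finset.mem_union.2 (Or.inr ?_), by simp; omega⟩
        rw [mem_newcol]
        exact ⟨rfl, mem_image_add.2 (by simpa [← hd] using mn_mem hsne)⟩
  · -- maxX
    rw [struct_maxX hStruct, hmaxX]
    push_cast
    ring
  · -- lastCol
    rw [lastCol_def, struct_maxX hStruct, columnYs_ext]
    split_ifs with h
    · rfl
    · exfalso
      push_cast at h
      omega
  · -- card
    rw [ext, Finset.card_union_of_disjoint, card_shiftP, card_newcol, card_image_add]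
    rw [Finset.disjoint_left]
    intro c hc1 hc2
    rw [mem_shiftP] at hc1
    rw [mem_newcol] at hc2
    have := le_maxX hc1
    simp only at this
    omega

end Cheesy
namespace Cheesy

def rest (P : Finset Cell) : Finset Cell := P.filter (fun c => c.1 ≠ maxX P)
def esh (P : Finset Cell) : ℤ := mn ((rest P).image Prod.snd)
def res (P : Finset Cell) : Finset Cell := shiftP (-(esh P)) (rest P)
def scol (P : Finset Cell) : Finset ℤ := (lastCol P).image (· + (-(esh P)))

lemma mem_rest {P : Finset Cell} {c : Cell} :
    c ∈ rest P ↔ c ∈ P ∧ c.1 ≠ maxX P := Finset.mem_filter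

lemma columnYs_rest (P : Finset Cell) (x : ℤ) :
    columnYs (rest P) x = if x = maxX P then ∅ else columnYs P x := by
  ext y
  rw [mem_columnYs, mem_rest]
  split_ifs with h
  · simp [h]
  · simp [mem_columnYs, h]

lemma normY_mn {P : Finset Cell} (h : NormY P) : mn (P.image Prod.snd) = 0 := by
  obtain ⟨c, hc, hc2⟩ := h.2
  apply mn_unique
  · exact Finset.mem_image.2 ⟨c, hc, hc2⟩
  · intro y hy
    obtain ⟨c', hc', rfl⟩ := Finset.mem_image.1 hy
    exact h.1 c' hc'

lemma image_snd_shiftP (P : Finset Cell) (d : ℤ) :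
    (shiftP d P).image Prod.snd = (P.image Prod.snd).image (· + d) := by
  ext z
  rw [mem_image_add]
  simp only [Finset.mem_image]
  constructor
  · rintro ⟨c, hc, rfl⟩
    rw [mem_shiftP] at hc
    exact ⟨_, hc, rfl⟩
  · rintro ⟨c, hc, hz⟩
    refine ⟨(c.1, c.2 + d), mem_shiftP.2 (by simpa using hc), by simp; omega⟩

/-- the inverse computations on an extension -/
lemma ext_inv {P : Finset Cell} {s : Finset ℤ} {w : ℕ}
    (hS : Struct P w) (hNY : NormY P) (hsOK : ColOK s)
    (hatt : ∀ u v : ℤ, IsComp s u v → u ≤ mx (lastCol P) + 1 ∧ mn (lastCol P) ≤ v) :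
    res (ext P s) = P ∧ scol (ext P s) = s ∧ (lastCol (ext P s)).card = s.card := by
  obtain ⟨hStruct, hNY', hmax, hlast, hcard⟩ := ext_struct hS hNY hsOK hatt
  set d := dshift s with hd
  have hrest : rest (ext P s) = shiftP d P := by
    ext c
    rw [mem_rest, hmax, ext]
    constructor
    · rintro ⟨hc, hne⟩
      rcases Finset.mem_union.1 hc with h | h
      · exact h
      · exfalso; exact hne (mem_newcol.1 h).1
    · intro hc
      refine ⟨Finset.mem_union.2 (Or.inl hc), ?_⟩
      rw [mem_shiftP] at hc
      have := le_maxX hc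
      simp only at this
      omega
  have hesh : esh (ext P s) = d := by
    rw [esh, hrest, image_snd_shiftP, mn_image_add, normY_mn hNY]
    · ring
    · obtain ⟨c, hc, _⟩ := hNY.2
      exact ⟨c.2, Finset.mem_image.2 ⟨c, hc, rfl⟩⟩
  refine ⟨?_, ?_, ?_⟩
  · rw [res, hesh, hrest, shiftP_shiftP]
    simp [shiftP_zero]
  · rw [scol, hesh, hlast, image_add_image_add]
    simp [image_add_zero]
  · rw [hlast, card_image_add]

/-- splitting a polyomino into its last column and the rest -/
lemma P_eq_rest_union (P : Finset Cell) :
    P = rest P ∪ newcol (maxX P) (lastCol P) := by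
  ext c
  rw [Finset.mem_union, mem_rest, mem_newcol, lastCol_def, mem_columnYs]
  constructor
  · intro hc
    by_cases h : c.1 = maxX P
    · exact Or.inr ⟨h, by rw [← h]; exact hc⟩
    · exact Or.inl ⟨hc, h⟩
  · rintro (⟨hc, _⟩ | ⟨h1, h2⟩)
    · exact hc
    · have : (c.1, c.2) ∈ P := by rw [h1]; exact h2
      simpa using this

lemma card_lastCol (P : Finset Cell) :
    (newcol (maxX P) (lastCol P)).card = (lastCol P).card := card_newcol _ _

/-- backward: structure of the result of removing the last column -/
lemma res_spec {P : Finset Cell} {n : ℕ} (hP : P ∈ A n) (hw : 1 ≤ maxX P) :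
    res P ∈ A (n - (lastCol P).card) ∧
    1 ≤ (lastCol P).card ∧ (lastCol P).card ≤ n - 1 ∧
    scol P ∈ att ((lastCol P).card : ℤ) (mn (lastCol (res P))) (mx (lastCol (res P))) ∧
    ext (res P) (scol P) = P := by
  obtain ⟨hC, hN, hcard⟩ := mem_A_iff.1 hP
  obtain ⟨hS, hNY, hmax0⟩ := cheesy_struct hC hN
  obtain ⟨_, hcols, hempty, ⟨a0, b0, hab0, hcol0⟩, hattP⟩ := hS
  set X := maxX P with hX
  have hcast : ((((maxX P).toNat + 1 : ℕ)) : ℤ) = X + 1 := by push_cast; omega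
  set e := esh P with he
  -- the rest is nonempty (column 0 survives)
  have hcol0rest : columnYs (rest P) 0 = Finset.Icc a0 b0 := by
    rw [columnYs_rest]
    split_ifs with h
    · omega
    · exact hcol0
  have hrestne : (rest P).Nonempty :=
    ⟨(0, a0), mem_columnYs.1 (by rw [hcol0rest]; exact Finset.mem_Icc.2 ⟨le_rfl, hab0⟩)⟩
  have he0 : 0 ≤ e := by
    rw [he, esh]
    obtain ⟨c, hc⟩ := hrestne
    have hmem := mn_mem (Finset.Nonempty.image ⟨c, hc⟩ Prod.snd)
    obtain ⟨c', hc', hc'2⟩ := Finset.mem_image.1 hmem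
    have := hN.1 c' (mem_rest.1 hc').1
    omega
  have hle : ∀ c ∈ rest P, e ≤ c.2 := by
    intro c hc
    exact mn_le (Finset.mem_image.2 ⟨c, hc, rfl⟩)
  have hex : ∃ c ∈ rest P, c.2 = e := by
    have hmem := mn_mem (Finset.Nonempty.image hrestne Prod.snd)
    obtain ⟨c', hc', hc'2⟩ := Finset.mem_image.1 hmem
    exact ⟨c', hc', hc'2⟩
  -- columns of res
  have hcolres : ∀ x : ℤ, columnYs (res P) x =
      (if x = X then (∅ : Finset ℤ) else columnYs P x).image (· + (-e)) := by
    intro x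
    rw [res, columnYs_shiftP, columnYs_rest]
  have hw2 : (1:ℤ) ≤ X := hw
  -- structure of res with width X (as a natural number: X.toNat)
  have hXcast : ((X.toNat : ℤ)) = X := Int.toNat_of_nonneg (by omega)
  have hSres : Struct (res P) X.toNat := by
    refine ⟨by omega, ?_, ?_, ?_, ?_⟩
    · intro x h0 hx
      rw [hXcast] at hx
      rw [hcolres]
      split_ifs with h
      · omega
      · exact colOK_image_add (hcols x h0 (by rw [hcast]; omega))
    · intro x hx
      rw [hXcast] at hx
      rw [hcolres]
      split_ifs with h
      · exact Finset.image_empty _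
      · rw [hempty x (by rw [hcast]; omega), Finset.image_empty]
    · refine ⟨a0 - e, b0 - e, by omega, ?_⟩
      rw [hcolres]
      split_ifs with h
      · omega
      · rw [hcol0, image_add_Icc]
        congr 1 <;> ring
    · intro x h0 hx
      rw [hXcast] at hx
      rw [hcolres, hcolres]
      split_ifs with h1 h2
      · omega
      · omega
      · omega
      · exact attach_image_add (hcols x h0 (by rw [hcast]; omega)).nonempty
          (hattP x h0 (by rw [hcast]; omega))
  have hNYres : NormY (res P) := by
    constructor
    · intro c hc
      rw [res, mem_shiftP] at hc
      have := hle _ hc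
      simp only at this
      omega
    · obtain ⟨c, hc, hc2⟩ := hex
      refine ⟨(c.1, c.2 - e), ?_, by simp; omega⟩
      rw [res, mem_shiftP]
      simpa [← he] using hc
  have hcardres : (res P).card = n - (lastCol P).card := by
    have hsplit : P.card = (rest P).card + (lastCol P).card := by
      conv_lhs => rw [P_eq_rest_union P]
      rw [Finset.card_union_of_disjoint, card_lastCol]
      rw [Finset.disjoint_left]
      intro c hc1 hc2
      exact (mem_rest.1 hc1).2 (mem_newcol.1 hc2).1
    rw [res, card_shiftP]
    omega
  have hlastne : (lastCol P).Nonempty := by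
    rw [lastCol_def]
    exact (hcols X (by omega) (by rw [hcast]; omega)).nonempty
  have ha1 : 1 ≤ (lastCol P).card := Finset.card_pos.2 hlastne
  have han : (lastCol P).card ≤ n - 1 := by
    have h1 : 1 ≤ (rest P).card := Finset.card_pos.2 hrestne
    have : P.card = (rest P).card + (lastCol P).card := by
      conv_lhs => rw [P_eq_rest_union P]
      rw [Finset.card_union_of_disjoint, card_lastCol]
      rw [Finset.disjoint_left]
      intro c hc1 hc2
      exact (mem_rest.1 hc1).2 (mem_newcol.1 hc2).1
    omega
  have hmaxres : maxX (res P) = X - 1 := by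
    rw [struct_maxX hSres, hXcast]
  -- the last column of res
  have hlastres : lastCol (res P) = (columnYs P (X - 1)).image (· + (-e)) := by
    rw [lastCol_def, hmaxres, hcolres]
    split_ifs with h
    · omega
    · rfl
  have hcolX1ne : (columnYs P (X-1)).Nonempty :=
    (hcols (X-1) (by omega) (by rw [hcast]; omega)).nonempty
  have hmnlast : mn (lastCol (res P)) = mn (columnYs P (X-1)) - e := by
    rw [hlastres, mn_image_add _ hcolX1ne]; ring
  have hmxlast : mx (lastCol (res P)) = mx (columnYs P (X-1)) - e := by
    rw [hlastres, mx_image_add _ hcolX1ne]; ring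
  have hlastOK : ColOK (lastCol P) := by
    rw [lastCol_def]
    exact hcols X (by omega) (by rw [hcast]; omega)
  -- scol membership
  have hscol : scol P ∈ att ((lastCol P).card : ℤ)
      (mn (lastCol (res P))) (mx (lastCol (res P))) := by
    rw [mem_att_iff (by exact_mod_cast ha1) (by rw [hmnlast, hmxlast]; have := mn_le_mx hcolX1ne; omega)]
    refine ⟨by rw [scol, card_image_add], colOK_image_add hlastOK, ?_⟩
    intro u v hc
    rw [scol, isComp_image_add] at hc
    have hattl := hattP (X-1) (by omega) (by rw [hcast]; omega)
    rw [show X - 1 + 1 = X by ring] at hattl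
    obtain ⟨e1, e2⟩ := hattl _ _ hc
    rw [hmnlast, hmxlast]
    rw [← he] at e1 e2
    omega
  -- reconstruction: ext (res P) (scol P) = P
  have hmnl0 : 0 ≤ mn (lastCol P) := by
    have := hN.1 _ (mem_columnYs.1 (mn_mem hlastne) : (X, mn (lastCol P)) ∈ P)
    exact this.2
  have hd : dshift (scol P) = e := by
    rw [dshift, scol, mn_image_add _ hlastne]
    -- global min is 0: either e = 0 or mn (lastCol P) = 0
    obtain ⟨c, hc, hc2⟩ := hN.2.2
    by_cases hcl : c.1 = X
    · -- the zero cell is in the last column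
      have : c.2 ∈ lastCol P := by
        rw [lastCol_def, ← hX, ← hcl]
        exact mem_columnYs.2 (by simpa using hc)
      have := mn_le this
      omega
    · have : c ∈ rest P := mem_rest.2 ⟨hc, hcl⟩
      have := hle _ this
      omega
  have hrecon : ext (res P) (scol P) = P := by
    rw [ext, hd, hmaxres, res, shiftP_shiftP, scol, image_add_image_add]
    rw [show e + -e = 0 by ring, show -e + e = 0 by ring, shiftP_zero, image_add_zero]
    rw [show X - 1 + 1 = X by ring]
    exact (P_eq_rest_union P).symm
  exact ⟨mem_A_iff.2 ⟨(struct_cheesy hSres hNYres).1, (struct_cheesy hSres hNYres).2,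
    hcardres⟩, ha1, han, hscol, hrecon⟩

end Cheesy
namespace Cheesy

lemma heightN_cast {t : Finset ℤ} (ht : t.Nonempty) :
    (heightN t : ℤ) = mx t - mn t + 1 := by
  rw [heightN_eq]
  have := mn_le_mx ht
  omega

lemma A_facts {P : Finset Cell} {k : ℕ} (hP : P ∈ A k) :
    Struct P ((maxX P).toNat + 1) ∧ NormY P ∧ 0 ≤ maxX P ∧ P.card = k ∧
      ColOK (lastCol P) := by
  obtain ⟨hC, hN, hcard⟩ := mem_A_iff.1 hP
  obtain ⟨hS, hNY, hmax0⟩ := cheesy_struct hC hN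
  refine ⟨hS, hNY, hmax0, hcard, ?_⟩
  rw [lastCol_def]
  exact hS.2.1 (maxX P) hmax0 (by push_cast; omega)

lemma A_zero : A 0 = ∅ := by
  rw [Finset.eq_empty_iff_forall_notMem]
  intro P hP
  obtain ⟨hC, hN, hcard⟩ := mem_A_iff.1 hP
  rw [Finset.card_eq_zero] at hcard
  obtain ⟨c, hc⟩ := hC.1.1
  rw [hcard] at hc
  exact Finset.notMem_empty _ hc

/-- index finset for polyominoes of width ≥ 2 and area n -/
noncomputable def S (n : ℕ) : Finset ((_ : ℕ) × (_ : Finset Cell) × Finset ℤ) :=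
  (Finset.Icc 1 (n-1)).sigma fun a => (A (n-a)).sigma fun P =>
    att (a : ℤ) (mn (lastCol P)) (mx (lastCol P))

lemma mem_S {n : ℕ} {x : (_ : ℕ) × (_ : Finset Cell) × Finset ℤ} :
    x ∈ S n ↔ x.1 ∈ Finset.Icc 1 (n-1) ∧ x.2.1 ∈ A (n - x.1) ∧
      x.2.2 ∈ att (x.1 : ℤ) (mn (lastCol x.2.1)) (mx (lastCol x.2.1)) := by
  rw [S, Finset.mem_sigma, Finset.mem_sigma]

/-- unpacked facts about a member of `S n` -/
lemma S_facts {n : ℕ} {x : (_ : ℕ) × (_ : Finset Cell) × Finset ℤ} (hx : x ∈ S n) :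
    ((x.2.2.card : ℤ) = (x.1 : ℤ) ∧ ColOK x.2.2 ∧
      (∀ u v : ℤ, IsComp x.2.2 u v →
        u ≤ mx (lastCol x.2.1) + 1 ∧ mn (lastCol x.2.1) ≤ v)) := by
  obtain ⟨h1, h2, h3⟩ := mem_S.1 hx
  rw [Finset.mem_Icc] at h1
  have hOK := (A_facts h2).2.2.2.2
  exact (mem_att_iff (by exact_mod_cast h1.1) (mn_le_mx hOK.nonempty)).1 h3

lemma master (n : ℕ) (f : Finset Cell → ℤ) :
    ∑ P ∈ (A n).filter (fun P => 1 ≤ maxX P), f P =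
    ∑ x ∈ S n, f (ext x.2.1 x.2.2) := by
  apply Finset.sum_nbij' (i := fun P => ⟨(lastCol P).card, res P, scol P⟩)
    (j := fun x => ext x.2.1 x.2.2)
  · -- maps into S n
    intro P hP
    rw [Finset.mem_filter] at hP
    obtain ⟨hA, hw⟩ := hP
    obtain ⟨h1, h2, h3, h4, h5⟩ := res_spec hA hw
    rw [mem_S]
    have hn1 : 1 ≤ n := by
      have := (A_facts hA).2.2.2.1
      have := Finset.card_pos.2 ⟨_, (mem_A_iff.1 hA).1.1.1.choose_spec⟩
      omega
    exact ⟨Finset.mem_Icc.2 ⟨h2, h3⟩, h1, h4⟩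
  · -- maps into filter
    intro x hx
    obtain ⟨h1, h2, h3⟩ := mem_S.1 hx
    rw [Finset.mem_Icc] at h1
    obtain ⟨hS, hNY, hmax0, hcard, hOK⟩ := A_facts h2
    obtain ⟨hcards, hsOK, hatt⟩ := S_facts hx
    obtain ⟨hS', hNY', hmax', _, hcard'⟩ := ext_struct hS hNY hsOK hatt
    rw [Finset.mem_filter]
    constructor
    · apply mem_A_iff.2
      refine ⟨(struct_cheesy hS' hNY').1, (struct_cheesy hS' hNY').2, ?_⟩
      rw [hcard', hcard]
      have : x.2.2.card = x.1 := by exact_mod_cast hcards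
      omega
    · rw [hmax']; omega
  · -- left inverse
    intro P hP
    rw [Finset.mem_filter] at hP
    exact (res_spec hP.1 hP.2).2.2.2.2
  · -- right inverse
    intro x hx
    obtain ⟨h1, h2, h3⟩ := mem_S.1 hx
    obtain ⟨hS, hNY, hmax0, hcard, hOK⟩ := A_facts h2
    obtain ⟨hcards, hsOK, hatt⟩ := S_facts hx
    obtain ⟨e1, e2, e3⟩ := ext_inv hS hNY hsOK hatt
    obtain ⟨a, P, s⟩ := x
    simp only at e1 e2 e3 hcards ⊢
    have : s.card = a := by exact_mod_cast hcards
    rw [e1, e2, e3, this]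
  · -- value compatibility
    intro P hP
    rw [Finset.mem_filter] at hP
    exact (congrArg f (res_spec hP.1 hP.2).2.2.2.2).symm

/-- the unique width-1 polyomino of area n -/
def P1 (n : ℕ) : Finset Cell := newcol 0 (Finset.Icc 0 ((n:ℤ) - 1))

lemma P1_struct {n : ℕ} (hn : 1 ≤ n) :
    Struct (P1 n) 1 ∧ NormY (P1 n) ∧ (P1 n).card = n ∧ maxX (P1 n) = 0 ∧
      lastCol (P1 n) = Finset.Icc 0 ((n:ℤ) - 1) := by
  have hne : (0:ℤ) ≤ (n:ℤ) - 1 := by omega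
  have hcols : ∀ x : ℤ, columnYs (P1 n) x =
      if x = 0 then Finset.Icc 0 ((n:ℤ)-1) else ∅ := by
    intro x
    split_ifs with h
    · rw [P1, h, columnYs_newcol_self]
    · rw [P1, columnYs_newcol_ne h]
  have hS : Struct (P1 n) 1 := by
    refine ⟨le_rfl, ?_, ?_, ?_, ?_⟩
    · intro x h0 h1
      have : x = 0 := by exact_mod_cast (by push_cast at h1 ⊢; omega : x = 0)
      rw [hcols, if_pos this]
      exact Or.inl ⟨0, (n:ℤ)-1, hne, rfl⟩
    · intro x hx
      rw [hcols, if_neg (by push_cast at hx; omega)]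
    · exact ⟨0, (n:ℤ)-1, hne, by rw [hcols, if_pos rfl]⟩
    · intro x h0 h1
      exfalso
      push_cast at h1
      omega
  refine ⟨hS, ⟨?_, ?_⟩, ?_, ?_, ?_⟩
  · intro c hc
    rw [P1, mem_newcol, Finset.mem_Icc] at hc
    omega
  · exact ⟨(0, 0), by rw [P1, mem_newcol, Finset.mem_Icc]; constructor <;> simp <;> omega, rfl⟩
  · rw [P1, card_newcol, Int.card_Icc]
    omega
  · rw [struct_maxX hS]; norm_num
  · rw [lastCol_def, struct_maxX hS]
    norm_num
    rw [hcols, if_pos rfl]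

lemma filter_w1 {n : ℕ} (hn : 1 ≤ n) :
    (A n).filter (fun P => ¬ 1 ≤ maxX P) = {P1 n} := by
  obtain ⟨hS1, hNY1, hcard1, hmax1, hlast1⟩ := P1_struct hn
  ext P
  rw [Finset.mem_filter, Finset.mem_singleton]
  constructor
  · rintro ⟨hA, hw⟩
    obtain ⟨hS, hNY, hmax0, hcard, hOK⟩ := A_facts hA
    have hmax : maxX P = 0 := by omega
    obtain ⟨_, hcols, hempty, ⟨a0, b0, hab0, hcol0⟩, _⟩ := hS
    have hN := (mem_A_iff.1 hA).2.1
    -- P is exactly its 0-th column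
    have hP : P = newcol 0 (Finset.Icc a0 b0) := by
      ext c
      rw [mem_newcol, Finset.mem_Icc]
      constructor
      · intro hc
        have hcc : c.2 ∈ columnYs P c.1 := mem_columnYs.2 hc
        have hc1 : c.1 = 0 := by
          by_contra hne
          rw [hempty c.1 (by rw [hmax] at *; push_cast; omega)] at hcc
          exact Finset.notMem_empty _ hcc
        rw [hc1, hcol0, Finset.mem_Icc] at hcc
        exact ⟨hc1, hcc⟩
      · rintro ⟨h1, h2⟩
        have : c.2 ∈ columnYs P 0 := by rw [hcol0, Finset.mem_Icc]; exact h2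
        have := mem_columnYs.1 this
        rwa [← h1] at this
    -- a0 = 0 from normalization
    have ha0 : a0 = 0 := by
      obtain ⟨c, hc, hc2⟩ := hN.2.2
      rw [hP, mem_newcol, Finset.mem_Icc] at hc
      have h1 : ∀ c' ∈ P, 0 ≤ c'.2 := fun c' hc' => (hN.1 c' hc').2
      have h2 : (0, a0) ∈ P := by
        rw [hP, mem_newcol, Finset.mem_Icc]
        exact ⟨rfl, le_rfl, hab0⟩
      have := h1 _ h2
      simp only at this
      omega
    have hb0 : b0 = (n:ℤ) - 1 := by
      have : P.card = n := hcard
      rw [hP, card_newcol, Int.card_Icc] at this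
      omega
    rw [hP, ha0, hb0, P1]
  · intro h
    subst h
    refine ⟨mem_A_iff.2 ⟨(struct_cheesy hS1 hNY1).1, (struct_cheesy hS1 hNY1).2, hcard1⟩, ?_⟩
    omega

def cZ (n : ℕ) : ℤ := ((A n).card : ℤ)
noncomputable def bZ (n : ℕ) : ℤ := ∑ P ∈ A n, (heightN (lastCol P) : ℤ)

lemma bZ_zero : bZ 0 = 0 := by rw [bZ, A_zero, Finset.sum_empty]
lemma cZ_zero : cZ 0 = 0 := by rw [cZ, A_zero]; simp

/-- heights over att sum -/
lemma inner_sums {n : ℕ} {a : ℕ} (ha : a ∈ Finset.Icc 1 (n-1)) {P : Finset Cell}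
    (hP : P ∈ A (n - a)) :
    (∑ s ∈ att (a:ℤ) (mn (lastCol P)) (mx (lastCol P)), (1:ℤ)) =
      (a:ℤ) * (heightN (lastCol P) : ℤ) + 1 ∧
    (∑ s ∈ att (a:ℤ) (mn (lastCol P)) (mx (lastCol P)),
        (heightN (lastCol (ext P s)) : ℤ)) =
      ((a:ℤ)^2 + (a:ℤ) - 1) * (heightN (lastCol P) : ℤ) + 1 := by
  rw [Finset.mem_Icc] at ha
  obtain ⟨hS, hNY, hmax0, hcard, hOK⟩ := A_facts hP
  have ha1 : (1:ℤ) ≤ (a:ℤ) := by exact_mod_cast ha.1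
  have hmM := mn_le_mx hOK.nonempty
  have hH := heightN_cast hOK.nonempty
  constructor
  · rw [Finset.sum_const, nsmul_eq_mul, mul_one, card_att ha1 hmM, hH]
    try ring
  · have hval : ∀ s ∈ att (a:ℤ) (mn (lastCol P)) (mx (lastCol P)),
        (heightN (lastCol (ext P s)) : ℤ) = (heightN s : ℤ) := by
      intro s hs
      obtain ⟨hcards, hsOK, hatt⟩ := (mem_att_iff ha1 hmM).1 hs
      obtain ⟨_, _, _, hlast, _⟩ := ext_struct hS hNY hsOK hatt
      rw [hlast, heightN_image_add _ hsOK.nonempty]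
    rw [Finset.sum_congr rfl hval, sum_heightN_att ha1 hmM, hH]
    try ring

set_option maxHeartbeats 1600000 in
/-- the two fundamental recurrences -/
lemma recurrences {n : ℕ} (hn : 1 ≤ n) :
    cZ n = 1 + ∑ a ∈ Finset.Icc 1 (n-1), ((a:ℤ) * bZ (n-a) + cZ (n-a)) ∧
    bZ n = (n:ℤ) + ∑ a ∈ Finset.Icc 1 (n-1),
      (((a:ℤ)^2 + (a:ℤ) - 1) * bZ (n-a) + cZ (n-a)) := by
  have split : ∀ f : Finset Cell → ℤ,
      ∑ P ∈ A n, f P = f (P1 n) + ∑ x ∈ S n, f (ext x.2.1 x.2.2) := by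
    intro f
    rw [← Finset.sum_filter_add_sum_filter_not (A n) (fun P => 1 ≤ maxX P) f]
    rw [master n f, filter_w1 hn, Finset.sum_singleton]
    ring
  obtain ⟨hS1, hNY1, hcard1, hmax1, hlast1⟩ := P1_struct hn
  have hsig : ∀ g : ℕ → Finset Cell → Finset ℤ → ℤ,
      ∑ x ∈ S n, g x.1 x.2.1 x.2.2 =
      ∑ a ∈ Finset.Icc 1 (n-1), ∑ P ∈ A (n-a),
        ∑ s ∈ att (a:ℤ) (mn (lastCol P)) (mx (lastCol P)), g a P s := by
    intro g
    rw [S, Finset.sum_sigma]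
    refine Finset.sum_congr rfl fun a _ => ?_
    rw [Finset.sum_sigma]
  constructor
  · have h1 := split (fun _ => (1:ℤ))
    rw [hsig (fun _ _ _ => (1:ℤ))] at h1
    have hc : cZ n = ∑ P ∈ A n, (1:ℤ) := by
      rw [Finset.sum_const, nsmul_eq_mul, mul_one, cZ]
    rw [hc, h1]
    congr 1
    refine Finset.sum_congr rfl fun a ha => ?_
    rw [Finset.sum_congr rfl (fun P hP => (inner_sums ha hP).1)]
    rw [Finset.sum_add_distrib, ← Finset.mul_sum, ← bZ]
    congr 1
    rw [Finset.sum_const, nsmul_eq_mul, mul_one, cZ]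
  · have h1 := split (fun P => (heightN (lastCol P) : ℤ))
    rw [hsig (fun _ P s => (heightN (lastCol (ext P s)) : ℤ))] at h1
    have hh : (heightN (lastCol (P1 n)) : ℤ) = n := by
      rw [hlast1, heightN_Icc (by omega : (0:ℤ) ≤ (n:ℤ)-1)]; ring
    rw [show bZ n = ∑ P ∈ A n, (heightN (lastCol P) : ℤ) from rfl, h1, hh]
    congr 1
    refine Finset.sum_congr rfl fun a ha => ?_
    rw [Finset.sum_congr rfl (fun P hP => (inner_sums ha hP).2)]
    rw [Finset.sum_add_distrib, ← Finset.mul_sum, ← bZ]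
    congr 1
    rw [Finset.sum_const, nsmul_eq_mul, mul_one, cZ]

end Cheesy
namespace Cheesy

open PowerSeries

noncomputable def cq (n : ℕ) : ℚ := (cZ n : ℚ)
noncomputable def bq (n : ℕ) : ℚ := (bZ n : ℚ)

noncomputable def Cs : PowerSeries ℚ := PowerSeries.mk cq
noncomputable def Bs : PowerSeries ℚ := PowerSeries.mk bq
noncomputable def Us : PowerSeries ℚ := PowerSeries.mk fun n => (n : ℚ)
noncomputable def Vs : PowerSeries ℚ := PowerSeries.mk fun n => if n = 0 then 0 else 1
noncomputable def U2s : PowerSeries ℚ :=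
  PowerSeries.mk fun n => if n = 0 then 0 else (n:ℚ)^2 + n - 1

lemma sum_range_split (g : ℕ → ℚ) {n : ℕ} (hn : 1 ≤ n) :
    ∑ k ∈ Finset.range (n+1), g k = g 0 + g n + ∑ k ∈ Finset.Icc 1 (n-1), g k := by
  have h : Finset.range (n+1) = insert 0 (insert n (Finset.Icc 1 (n-1))) := by
    ext k
    simp only [Finset.mem_range, Finset.mem_insert, Finset.mem_Icc]
    omega
  rw [h, Finset.sum_insert (by simp only [Finset.mem_insert, Finset.mem_Icc]; omega),
    Finset.sum_insert (by rw [Finset.mem_Icc]; omega)]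
  ring

lemma conv_eq (u v : ℕ → ℚ) (hu : u 0 = 0) (hv : v 0 = 0) {n : ℕ} (hn : 1 ≤ n) :
    (PowerSeries.coeff n) (PowerSeries.mk u * PowerSeries.mk v) =
      ∑ a ∈ Finset.Icc 1 (n-1), u a * v (n-a) := by
  rw [PowerSeries.coeff_mul]
  simp only [PowerSeries.coeff_mk]
  rw [Finset.Nat.sum_antidiagonal_eq_sum_range_succ_mk]
  rw [sum_range_split _ hn]
  rw [hu, Nat.sub_self, hv]
  ring

lemma bq_zero : bq 0 = 0 := by rw [bq, bZ_zero]; norm_num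
lemma cq_zero : cq 0 = 0 := by rw [cq, cZ_zero]; norm_num

lemma E1 : Cs = Vs + Us * Bs + Vs * Cs := by
  apply PowerSeries.ext
  intro n
  rw [map_add, map_add]
  rcases Nat.eq_zero_or_pos n with rfl | hn
  · simp only [Cs, Vs, Us, Bs, PowerSeries.coeff_zero_eq_constantCoeff, map_mul]
    simp [PowerSeries.constantCoeff_mk, cq_zero, bq_zero]
  · have hrec := (recurrences hn).1
    have hq : cq n = 1 + ∑ a ∈ Finset.Icc 1 (n-1), ((a:ℚ) * bq (n-a) + cq (n-a)) := by
      rw [cq, hrec]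
      push_cast [bq, cq]
      ring
    have hUB : (PowerSeries.coeff n) (PowerSeries.mk (fun k => (k:ℚ)) * PowerSeries.mk bq)
        = ∑ a ∈ Finset.Icc 1 (n-1), (a:ℚ) * bq (n-a) :=
      conv_eq _ _ (by norm_num) bq_zero hn
    have hVC : (PowerSeries.coeff n)
        (PowerSeries.mk (fun k => if k = 0 then (0:ℚ) else 1) * PowerSeries.mk cq)
        = ∑ a ∈ Finset.Icc 1 (n-1), cq (n-a) := by
      rw [conv_eq _ _ (by norm_num) cq_zero hn]
      refine Finset.sum_congr rfl fun a ha => ?_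
      rw [Finset.mem_Icc] at ha
      rw [if_neg (by omega), one_mul]
    rw [Cs, Us, Bs, Vs, PowerSeries.coeff_mk, hq, hUB, hVC, PowerSeries.coeff_mk,
      if_neg (by omega), Finset.sum_add_distrib]
    ring

lemma E2 : Bs = Us + U2s * Bs + Vs * Cs := by
  apply PowerSeries.ext
  intro n
  rw [map_add, map_add]
  rcases Nat.eq_zero_or_pos n with rfl | hn
  · simp only [Bs, Vs, Us, Cs, U2s, PowerSeries.coeff_zero_eq_constantCoeff, map_mul]
    simp [PowerSeries.constantCoeff_mk, cq_zero, bq_zero]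
  · have hrec := (recurrences hn).2
    have hq : bq n = (n:ℚ) + ∑ a ∈ Finset.Icc 1 (n-1),
        (((a:ℚ)^2 + a - 1) * bq (n-a) + cq (n-a)) := by
      rw [bq, hrec]
      push_cast [bq, cq]
      ring
    have hU2B : (PowerSeries.coeff n)
        (PowerSeries.mk (fun k => if k = 0 then (0:ℚ) else (k:ℚ)^2 + k - 1) * PowerSeries.mk bq)
        = ∑ a ∈ Finset.Icc 1 (n-1), ((a:ℚ)^2 + a - 1) * bq (n-a) := by
      rw [conv_eq _ _ (by norm_num) bq_zero hn]
      refine Finset.sum_congr rfl fun a ha => ?_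
      rw [Finset.mem_Icc] at ha
      rw [if_neg (by omega)]
    have hVC : (PowerSeries.coeff n)
        (PowerSeries.mk (fun k => if k = 0 then (0:ℚ) else 1) * PowerSeries.mk cq)
        = ∑ a ∈ Finset.Icc 1 (n-1), cq (n-a) := by
      rw [conv_eq _ _ (by norm_num) cq_zero hn]
      refine Finset.sum_congr rfl fun a ha => ?_
      rw [Finset.mem_Icc] at ha
      rw [if_neg (by omega), one_mul]
    rw [Bs, Us, U2s, Vs, Cs, PowerSeries.coeff_mk, hq, hU2B, hVC, PowerSeries.coeff_mk,
      Finset.sum_add_distrib]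
    ring

lemma one_sub_X_mul_coeff (f : ℕ → ℚ) (n : ℕ) :
    (PowerSeries.coeff (n+1)) ((1 - PowerSeries.X) * PowerSeries.mk f) =
      f (n+1) - f n := by
  rw [sub_mul, one_mul, map_sub, PowerSeries.coeff_succ_X_mul, PowerSeries.coeff_mk,
    PowerSeries.coeff_mk]

lemma one_sub_X_mul_coeff0 (f : ℕ → ℚ) :
    (PowerSeries.coeff 0) ((1 - PowerSeries.X) * PowerSeries.mk f) = f 0 := by
  rw [sub_mul, one_mul, map_sub, PowerSeries.coeff_zero_X_mul, PowerSeries.coeff_mk,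
    sub_zero]

lemma eV : (1 - PowerSeries.X) * Vs = PowerSeries.X := by
  apply PowerSeries.ext
  intro n
  cases n with
  | zero => rw [Vs, one_sub_X_mul_coeff0, PowerSeries.coeff_X]; norm_num
  | succ m =>
    rw [Vs, one_sub_X_mul_coeff, PowerSeries.coeff_X]
    rcases Nat.eq_zero_or_pos m with rfl | hm
    · norm_num
    · rw [if_neg (by omega), if_neg (by omega), if_neg (by omega)]
      ring

lemma eU : (1 - PowerSeries.X) * Us = Vs := by
  apply PowerSeries.ext
  intro n
  cases n with
  | zero =>
    rw [Us, one_sub_X_mul_coeff0, Vs, PowerSeries.coeff_mk, if_pos rfl]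
    norm_num
  | succ m =>
    rw [Us, one_sub_X_mul_coeff, Vs, PowerSeries.coeff_mk, if_neg (by omega)]
    push_cast
    ring

lemma eU2 : (1 - PowerSeries.X) * U2s = Us + Us - PowerSeries.X := by
  apply PowerSeries.ext
  intro n
  rw [map_sub, map_add]
  cases n with
  | zero =>
    rw [U2s, one_sub_X_mul_coeff0, Us, PowerSeries.coeff_mk, PowerSeries.coeff_X]
    norm_num
  | succ m =>
    rw [U2s, one_sub_X_mul_coeff, Us, PowerSeries.coeff_mk, PowerSeries.coeff_X,
      if_neg (by omega)]
    rcases Nat.eq_zero_or_pos m with rfl | hm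
    · norm_num
    · rw [if_neg (by omega), if_neg (by omega)]
      push_cast
      ring

theorem final :
    ((1 : PowerSeries ℚ) - 6 * PowerSeries.X + 8 * PowerSeries.X ^ 2
        - PowerSeries.X ^ 3) * Cs
    = PowerSeries.X - 3 * PowerSeries.X ^ 2 + PowerSeries.X ^ 3 := by
  have hE1 := E1
  have hE2 := E2
  have h1 := eV
  have h2 := eU
  have h3 := eU2
  have hDne : (1 : PowerSeries ℚ) - PowerSeries.X ≠ 0 := by
    intro h
    have := congrArg (PowerSeries.constantCoeff) h
    rw [map_sub, map_one, PowerSeries.constantCoeff_X, map_zero] at this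
    norm_num at this
  set X := (PowerSeries.X : PowerSeries ℚ)
  set D := (1 : PowerSeries ℚ) - X with hD
  have s1 : D^2 * Cs = D*X + X*Bs + D*X*Cs := by
    linear_combination (D^2) * hE1 + D * h1 + Bs * D * h2 + Bs * h1 + Cs * D * h1
  have s2 : D^3 * Bs = D*X + (2*X - D^2*X)*Bs + D^2*X*Cs := by
    linear_combination (D^3) * hE2 + D^2 * h2 + D * h1 +
      Bs * (D^2 * h3 + 2 * D * h2 + 2 * h1) + Cs * D^2 * h1
  apply mul_left_cancel₀ hDne
  linear_combination (D^3 - 2*X + D^2*X) * s1 + X * s2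

end Cheesy
/-- The area generating function of level one cheesy polyominoes is
`q(1 − 3q + q²) / (1 − 6q + 8q² − q³)`. -/
theorem stmt_3 :
    ((1 : PowerSeries ℚ) - 6 * PowerSeries.X + 8 * PowerSeries.X ^ 2
        - PowerSeries.X ^ 3)
      * PowerSeries.mk (fun n => (cheesyCount 1 n : ℚ))
    = PowerSeries.X - 3 * PowerSeries.X ^ 2 + PowerSeries.X ^ 3 := by
  have h : PowerSeries.mk (fun n => (cheesyCount 1 n : ℚ)) = Cheesy.Cs := by
    apply PowerSeries.ext
    intro n
    rw [PowerSeries.coeff_mk, Cheesy.Cs, PowerSeries.coeff_mk, Cheesy.cq, Cheesy.cZ,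
      Cheesy.cheesyCount_eq_A]
    norm_num
  rw [h]
  exact Cheesy.final
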